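/- arXiv:1008.1516 — 8 statements merged into one kernel-verified Lean document; each statement's English description precedes it below -/
import Mathlib

section
/- Given a finite set V of agents, a fixed agent v, and nonnegative target rates m_u ≥ 0 for each u ≠ v, the nested event strategy — which orders the agents with strictly positive rates as m_{v_1} ≥ m_{v_2} ≥ … ≥ m_{v_ℓ} > 0 and holds event P_i = {v, v_1, …, v_i} at rate r_i = m_{v_i} − m_{v_{i+1}} (with m_{v_{ℓ+1}} := 0) — realizes the target rates: for every u ≠ v, the sum over events containing u of the event's rate equals m_u, and moreover the total rate Σ_i r_i equals max_{u≠v} m_u. -/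
/-- The nested event strategy realizes the target rates and its
total rate is the maximum target rate. Here `l` lists the agents with strictly
positive target rate in decreasing order of `m`, and the nested strategy `s`
holds the event `{v, v₁, …, vᵢ}` at rate `m vᵢ - m vᵢ₊₁` (with `m v_{ℓ+1} := 0`). -/
theorem nested_strategy_realizes {V : Type*} [Fintype V] [DecidableEq V]
    (v : V) (m : V → ℝ) (hm : ∀ u, 0 ≤ m u)
    (l : List V) (hnd : l.Nodup) (hv : v ∉ l)
    (hmem : ∀ u : V, u ∈ l ↔ u ≠ v ∧ 0 < m u)
    (hsort : l.Pairwise (fun x y => m y ≤ m x))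
    (hne : (Finset.univ.erase v).Nonempty)
    (s : List (Finset V × ℝ))
    (hs : s = (List.finRange l.length).map (fun i =>
      (insert v ((l.take (i.1 + 1)).toFinset),
       m (l.get i) - (if h : i.1 + 1 < l.length then m (l.get ⟨i.1 + 1, h⟩) else 0)))) :
    (∀ u : V, u ≠ v → ((s.map (fun e => if u ∈ e.1 then e.2 else 0)).sum = m u)) ∧
    (s.map Prod.snd).sum = (Finset.univ.erase v).sup' hne m := by
  classical
  subst hs
  set g : ℕ → ℝ := fun i => if h : i < l.length then m (l.get ⟨i, h⟩) else 0 with hg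
  have hgn : ∀ i, l.length ≤ i → g i = 0 := by
    intro i hi; simp only [hg]; rw [dif_neg (by omega)]
  have hgp : ∀ (i : ℕ) (h : i < l.length), g i = m (l.get ⟨i, h⟩) := by
    intro i h; simp only [hg]; rw [dif_pos h]
  have key : ∀ (G : ℕ → ℝ),
      (((List.finRange l.length).map (fun i : Fin l.length => G i.1)).sum
        = ∑ i ∈ Finset.range l.length, G i) := by
    intro G
    rw [← Fin.sum_univ_def]
    exact Fin.sum_univ_eq_sum_range G l.length
  constructor
  · intro u hu
    rw [List.map_map]
    have hfun : ((fun e : Finset V × ℝ => if u ∈ e.1 then e.2 else 0) ∘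
        (fun i : Fin l.length =>
          (insert v ((l.take (i.1 + 1)).toFinset),
           m (l.get i) - (if h : i.1 + 1 < l.length then m (l.get ⟨i.1 + 1, h⟩) else 0))))
        = fun i : Fin l.length =>
            (fun k : ℕ => if u ∈ l.take (k+1) then g k - g (k+1) else 0) i.1 := by
      funext i
      simp only [Function.comp_apply, Finset.mem_insert, List.mem_toFinset]
      have h1 : (u = v ∨ u ∈ l.take (i.1+1)) ↔ u ∈ l.take (i.1+1) := by
        constructor
        · rintro (rfl | h) <;> [exact absurd rfl hu; exact h]
        · exact Or.inr
      rw [if_congr h1 rfl rfl, hgp i.1 i.2]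
    rw [hfun, key (fun k : ℕ => if u ∈ l.take (k+1) then g k - g (k+1) else 0)]
    by_cases hul : u ∈ l
    · obtain ⟨j, hj⟩ := List.mem_iff_get.mp hul
      have hcond : ∀ k : ℕ, (u ∈ l.take (k+1)) ↔ j.1 ≤ k := by
        intro k
        rw [List.mem_take_iff_getElem]
        constructor
        · rintro ⟨i, hi, hiu⟩
          have hil : i < l.length := lt_of_lt_of_le hi (min_le_right _ _)
          have : l[i] = l[j.1]'j.2 := by
            rw [hiu, ← hj]; rfl
          have hij : i = j.1 := (List.Nodup.getElem_inj_iff hnd).mp this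
          have : i < k + 1 := lt_of_lt_of_le hi (min_le_left _ _)
          omega
        · intro hjk
          refine ⟨j.1, lt_min (by omega) j.2, ?_⟩
          rw [← hj]; rfl
      have hstep : ∀ k : ℕ, (if u ∈ l.take (k+1) then g k - g (k+1) else 0)
          = (if j.1 ≤ k then g k - g (k+1) else 0) := by
        intro k; rw [if_congr (hcond k) rfl rfl]
      simp only [hstep]
      have h1 : ∑ i ∈ Finset.range l.length, (if j.1 ≤ i then g i - g (i+1) else 0)
          = ∑ i ∈ Finset.Ico j.1 l.length, (g i - g (i+1)) := by
        rw [← Finset.sum_filter]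
        congr 1
        ext x
        simp only [Finset.mem_filter, Finset.mem_Ico, Finset.mem_range]
        omega
      rw [h1, Finset.sum_Ico_eq_sum_range]
      have h2 : ∑ i ∈ Finset.range (l.length - j.1), (g (j.1 + i) - g (j.1 + i + 1))
          = g (j.1 + 0) - g (j.1 + (l.length - j.1)) := by
        rw [← Finset.sum_range_sub' (fun k => g (j.1 + k)) (l.length - j.1)]
        apply Finset.sum_congr rfl
        intro i _
        simp only [Nat.add_assoc]
      rw [h2, Nat.add_zero, Nat.add_sub_cancel' (le_of_lt j.2), hgn l.length le_rfl,
        sub_zero, hgp j.1 j.2]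
      rw [show (⟨j.1, j.2⟩ : Fin l.length) = j from rfl, hj]
    · have hz : m u = 0 := by
        have : ¬ (0 < m u) := fun hc => hul ((hmem u).mpr ⟨hu, hc⟩)
        linarith [hm u]
      have : ∀ k ∈ Finset.range l.length,
          (if u ∈ l.take (k+1) then g k - g (k+1) else 0) = 0 := by
        intro k _
        rw [if_neg (fun hc => hul (List.mem_of_mem_take hc))]
      rw [Finset.sum_congr rfl this, Finset.sum_const_zero, hz]
  · rw [List.map_map]
    have hfun : (Prod.snd ∘ (fun i : Fin l.length =>
          ((insert v ((l.take (i.1 + 1)).toFinset) : Finset V),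
           m (l.get i) - (if h : i.1 + 1 < l.length then m (l.get ⟨i.1 + 1, h⟩) else 0))))
        = fun i : Fin l.length => (fun k : ℕ => g k - g (k+1)) i.1 := by
      funext i
      simp only [Function.comp_apply]
      rw [hgp i.1 i.2]
    rw [hfun, key (fun k : ℕ => g k - g (k+1)), Finset.sum_range_sub' g, hgn l.length le_rfl, sub_zero]
    by_cases h0 : l.length = 0
    · have hg0 : g 0 = 0 := hgn 0 (by omega)
      have hz : ∀ u ∈ Finset.univ.erase v, m u = 0 := by
        intro u hu
        have huv : u ≠ v := (Finset.mem_erase.mp hu).1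
        have hul : u ∉ l := by
          intro hc
          exact absurd (List.length_pos_of_mem hc) (by omega)
        have : ¬ (0 < m u) := fun hc => hul ((hmem u).mpr ⟨huv, hc⟩)
        linarith [hm u]
      rw [hg0]
      obtain ⟨u0, hu0⟩ := hne
      refine le_antisymm ?_ (Finset.sup'_le _ _ fun u hu => le_of_eq (hz u hu))
      calc (0:ℝ) = m u0 := (hz u0 hu0).symm
        _ ≤ _ := Finset.le_sup' m hu0
    · have hpos : 0 < l.length := Nat.pos_of_ne_zero h0
      have hga : g 0 = m (l.get ⟨0, hpos⟩) := hgp 0 hpos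
      have hal : l.get ⟨0, hpos⟩ ∈ l := List.get_mem l _
      have hav : l.get ⟨0, hpos⟩ ≠ v := ((hmem _).mp hal).1
      have hmax : ∀ u, u ≠ v → m u ≤ m (l.get ⟨0, hpos⟩) := by
        intro u hu
        by_cases hul : u ∈ l
        · obtain ⟨j, hj⟩ := List.mem_iff_get.mp hul
          rcases Nat.eq_zero_or_pos j.1 with h | h
          · have : j = ⟨0, hpos⟩ := Fin.ext h
            rw [← hj, this]
          · have := List.Pairwise.rel_get_of_lt hsort
              (show (⟨0, hpos⟩ : Fin l.length) < j from h)
            rw [hj] at this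
            exact this
        · have : ¬ (0 < m u) := fun hc => hul ((hmem u).mpr ⟨hu, hc⟩)
          linarith [hm (l.get ⟨0, hpos⟩)]
      rw [hga]
      refine le_antisymm ?_
        (Finset.sup'_le _ _ fun u hu => hmax u (Finset.mem_erase.mp hu).1)
      exact Finset.le_sup' m (Finset.mem_erase.mpr ⟨hav, Finset.mem_univ _⟩)
end

section
/- Let V be a finite set, v ∈ V, and (m_u)_{u≠v} nonnegative target rates, not all zero. Suppose a strategy for v consists of events (P_1, r_1), …, (P_k, r_k), with v ∈ P_i and r_i > 0, that realizes the targets (i.e., for each u ≠ v, Σ_{i : u ∈ P_i} r_i = m_u). If Σ_i r_i > max_{u≠v} m_u, then its cost Σ_i r_i (c·|P_i \ {v}| + b) is strictly greater than the cost b·max_{u≠v} m_u + c·Σ_{u≠v} m_u of the nested strategy, for any b > 0 and c > 0. Consequently, any cost-minimizing realizing strategy satisfies Σ_i r_i = max_{u≠v} m_u. -/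
open Finset

section Aux

variable {V : Type*} [Fintype V] [DecidableEq V]

/-- The event set at threshold `t` in the nested strategy. -/
noncomputable def pset (v : V) (m : V → ℝ) (t : ℝ) : Finset V :=
  insert v ((Finset.univ.erase v).filter (fun u => t ≤ m u))

lemma mem_pset {v u : V} (m : V → ℝ) (t : ℝ) (hu : u ≠ v) :
    u ∈ pset v m t ↔ t ≤ m u := by
  simp [pset, Finset.mem_insert, Finset.mem_filter, Finset.mem_erase, hu]

/-- The nested strategy built from a (strictly descending, positive) list of
threshold values. -/
noncomputable def nested (v : V) (m : V → ℝ) : List ℝ → List (Finset V × ℝ)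
  | [] => []
  | t :: rest => (pset v m t, t - rest.headD 0) :: nested v m rest

lemma nested_valid (v : V) (m : V → ℝ) :
    ∀ ts : List ℝ, ts.Pairwise (· > ·) → (∀ t ∈ ts, (0:ℝ) < t) →
      ∀ e ∈ nested v m ts, v ∈ e.1 ∧ 0 < e.2 := by
  intro ts
  induction ts with
  | nil => intro _ _ e he; simp [nested] at he
  | cons t rest ih =>
    intro hp hpos e he
    simp only [nested, List.mem_cons] at he
    rcases he with he | he
    · subst he
      refine ⟨Finset.mem_insert_self _ _, ?_⟩
      cases rest with
      | nil => simpa using hpos t (by simp)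
      | cons t' rest' =>
        have : t > t' := (List.pairwise_cons.1 hp).1 t' (by simp)
        simpa using sub_pos.mpr this
    · exact ih (List.pairwise_cons.1 hp).2
        (fun s hs => hpos s (List.mem_cons_of_mem _ hs)) e he

lemma nested_snd_sum (v : V) (m : V → ℝ) :
    ∀ ts : List ℝ, ((nested v m ts).map Prod.snd).sum = ts.headD 0 := by
  intro ts
  induction ts with
  | nil => simp [nested]
  | cons t rest ih =>
    simp only [nested, List.map_cons, List.sum_cons, ih, List.headD_cons]
    ring

lemma nested_ifsum_all {v u : V} (m : V → ℝ) (hu : u ≠ v) :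
    ∀ ts : List ℝ, (∀ t ∈ ts, t ≤ m u) →
      ((nested v m ts).map (fun e => if u ∈ e.1 then e.2 else 0)).sum =
        ((nested v m ts).map Prod.snd).sum := by
  intro ts
  induction ts with
  | nil => intro _; simp [nested]
  | cons t rest ih =>
    intro hall
    have ht : t ≤ m u := hall t (by simp)
    simp only [nested, List.map_cons, List.sum_cons, mem_pset m t hu, ht, if_true]
    rw [ih (fun s hs => hall s (List.mem_cons_of_mem _ hs))]

lemma nested_ifsum_zero {v u : V} (m : V → ℝ) (hu : u ≠ v) :
    ∀ ts : List ℝ, (∀ t ∈ ts, m u < t) →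
      ((nested v m ts).map (fun e => if u ∈ e.1 then e.2 else 0)).sum = 0 := by
  intro ts
  induction ts with
  | nil => intro _; simp [nested]
  | cons t rest ih =>
    intro hall
    have ht : ¬ t ≤ m u := not_le.mpr (hall t (by simp))
    simp only [nested, List.map_cons, List.sum_cons, mem_pset m t hu, ht, if_false]
    rw [ih (fun s hs => hall s (List.mem_cons_of_mem _ hs))]
    ring

lemma nested_ifsum_mem {v u : V} (m : V → ℝ) (hu : u ≠ v) :
    ∀ ts : List ℝ, ts.Pairwise (· > ·) → m u ∈ ts →
      ((nested v m ts).map (fun e => if u ∈ e.1 then e.2 else 0)).sum = m u := by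
  intro ts
  induction ts with
  | nil => intro _ h; simp at h
  | cons t rest ih =>
    intro hp hmem
    rcases List.mem_cons.1 hmem with heq | hmem'
    · have hall : ∀ s ∈ t :: rest, s ≤ m u := by
        intro s hs
        rcases List.mem_cons.1 hs with rfl | hs'
        · exact le_of_eq heq.symm
        · exact le_of_lt (heq ▸ (List.pairwise_cons.1 hp).1 s hs')
      rw [nested_ifsum_all m hu _ hall, nested_snd_sum]
      simp [heq]
    · have ht : ¬ t ≤ m u :=
        not_le.mpr ((List.pairwise_cons.1 hp).1 _ hmem')
      simp only [nested, List.map_cons, List.sum_cons, mem_pset m t hu, ht, if_false]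
      rw [ih (List.pairwise_cons.1 hp).2 hmem']
      ring

lemma list_sum_map_add {α : Type*} (l : List α) (f g : α → ℝ) :
    (l.map (fun x => f x + g x)).sum = (l.map f).sum + (l.map g).sum := by
  induction l with
  | nil => simp
  | cons x rest ih => simp [ih]; ring

lemma list_sum_map_mul {α : Type*} (l : List α) (a : ℝ) (f : α → ℝ) :
    (l.map (fun x => a * f x)).sum = a * (l.map f).sum := by
  induction l with
  | nil => simp
  | cons x rest ih => simp [ih]; ring

lemma list_finset_swap {α β : Type*} [DecidableEq β] (s : List α) (T : Finset β) (g : α → β → ℝ) :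
    (s.map (fun e => ∑ u ∈ T, g e u)).sum = ∑ u ∈ T, (s.map (fun e => g e u)).sum := by
  induction s with
  | nil => simp
  | cons e rest ih => simp [ih, Finset.sum_add_distrib]

lemma card_erase_eq (v : V) (P : Finset V) :
    ((P.erase v).card : ℝ) = ∑ u ∈ Finset.univ.erase v, (if u ∈ P then (1:ℝ) else 0) := by
  rw [Finset.sum_boole]
  congr 2
  ext u
  simp [Finset.mem_erase, and_comm]

/-- The cost of any realizing strategy equals `c·Σm + b·(total rate)`. -/
lemma cost_eq (v : V) (m : V → ℝ) (b c : ℝ) (s : List (Finset V × ℝ))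
    (hreal : ∀ u : V, u ≠ v →
      ((s.map (fun e => if u ∈ e.1 then e.2 else 0)).sum = m u)) :
    (s.map (fun e => e.2 * (c * ((e.1.erase v).card : ℝ) + b))).sum =
      c * (∑ u ∈ Finset.univ.erase v, m u) + b * (s.map Prod.snd).sum := by
  have key : ∀ e : Finset V × ℝ,
      e.2 * (c * ((e.1.erase v).card : ℝ) + b) =
        (∑ u ∈ Finset.univ.erase v, c * (if u ∈ e.1 then e.2 else 0)) + b * e.2 := by
    intro e
    have h1 : ∀ u : V, c * (if u ∈ e.1 then e.2 else 0) =
        e.2 * (c * (if u ∈ e.1 then (1:ℝ) else 0)) := by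
      intro u; by_cases h : u ∈ e.1 <;> simp [h, mul_comm]
    simp only [h1, ← Finset.mul_sum, card_erase_eq v e.1]
    ring
  calc (s.map (fun e => e.2 * (c * ((e.1.erase v).card : ℝ) + b))).sum
      = (s.map (fun e =>
          (∑ u ∈ Finset.univ.erase v, c * (if u ∈ e.1 then e.2 else 0)) + b * e.2)).sum := by
        congr 1; exact List.map_congr_left (fun e _ => key e)
    _ = (s.map (fun e => ∑ u ∈ Finset.univ.erase v,
          c * (if u ∈ e.1 then e.2 else 0))).sum + (s.map (fun e => b * e.2)).sum :=
        list_sum_map_add s _ _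
    _ = (∑ u ∈ Finset.univ.erase v,
          (s.map (fun e => c * (if u ∈ e.1 then e.2 else 0))).sum) + b * (s.map Prod.snd).sum := by
        rw [list_finset_swap, list_sum_map_mul]
    _ = c * (∑ u ∈ Finset.univ.erase v, m u) + b * (s.map Prod.snd).sum := by
        congr 1
        rw [Finset.mul_sum]
        refine Finset.sum_congr rfl ?_
        intro u hu
        rw [list_sum_map_mul, hreal u (Finset.mem_erase.1 hu).1]

end Aux

/-- Any valid strategy realizing the target rates whose total rate
strictly exceeds the maximum target rate `M` has cost strictly greater than the
cost `b·M + c·Σ_{u≠v} m u` of the nested strategy; consequently any cost-minimizing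
realizing strategy has total rate exactly `M`. -/
theorem realizing_strategy_cost {V : Type*} [Fintype V] [DecidableEq V]
    (v : V) (m : V → ℝ) (hm : ∀ u, 0 ≤ m u)
    (hex : ∃ u, u ≠ v ∧ 0 < m u)
    (b c : ℝ) (hb : 0 < b) (hc : 0 < c)
    (M : ℝ) (hM : IsGreatest (m '' {u | u ≠ v}) M)
    (s : List (Finset V × ℝ)) (hval : ∀ e ∈ s, v ∈ e.1 ∧ 0 < e.2)
    (hreal : ∀ u : V, u ≠ v → ((s.map (fun e => if u ∈ e.1 then e.2 else 0)).sum = m u)) :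
    (M < (s.map Prod.snd).sum →
      b * M + c * ∑ u ∈ Finset.univ.erase v, m u <
        (s.map (fun e => e.2 * (c * ((e.1.erase v).card : ℝ) + b))).sum) ∧
    ((∀ s' : List (Finset V × ℝ), (∀ e ∈ s', v ∈ e.1 ∧ 0 < e.2) →
        (∀ u : V, u ≠ v → ((s'.map (fun e => if u ∈ e.1 then e.2 else 0)).sum = m u)) →
        (s.map (fun e => e.2 * (c * ((e.1.erase v).card : ℝ) + b))).sum ≤
          (s'.map (fun e => e.2 * (c * ((e.1.erase v).card : ℝ) + b))).sum) →
      (s.map Prod.snd).sum = M) := by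
  classical
  obtain ⟨⟨u₀, hu₀mem, hu₀⟩, hub⟩ := hM
  have hu₀ne : u₀ ≠ v := hu₀mem
  have hub' : ∀ u : V, u ≠ v → m u ≤ M := fun u hu => hub ⟨u, hu, rfl⟩
  obtain ⟨u₁, hu₁ne, hu₁pos⟩ := hex
  have hMpos : 0 < M := lt_of_lt_of_le hu₁pos (hub' u₁ hu₁ne)
  have hcost : (s.map (fun e => e.2 * (c * ((e.1.erase v).card : ℝ) + b))).sum =
      c * (∑ u ∈ Finset.univ.erase v, m u) + b * (s.map Prod.snd).sum :=
    cost_eq v m b c s hreal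
  constructor
  · intro hlt
    rw [hcost]
    have := mul_lt_mul_of_pos_left hlt hb
    linarith
  · intro hmin
    -- build the nested strategy from the sorted positive values of m
    set T : Finset ℝ := ((Finset.univ.erase v).image m).filter (fun t => 0 < t) with hT
    set ts : List ℝ := T.sort (· ≥ ·) with hts
    have hmem_ts : ∀ t : ℝ, t ∈ ts ↔ t ∈ T := fun t => Finset.mem_sort _
    have hpair : ts.Pairwise (· > ·) := by
      have h1 : ts.Pairwise (· ≥ ·) := Finset.pairwise_sort _ _
      have h2 : ts.Pairwise (· ≠ ·) := Finset.sort_nodup _ _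
      exact (h1.and h2).imp (fun h => lt_of_le_of_ne h.1.le h.2.symm)
    have hpos_ts : ∀ t ∈ ts, (0:ℝ) < t := by
      intro t ht
      exact (Finset.mem_filter.1 ((hmem_ts t).1 ht)).2
    have hMts : M ∈ ts := by
      rw [hmem_ts]
      refine Finset.mem_filter.2 ⟨?_, hMpos⟩
      exact Finset.mem_image.2 ⟨u₀, Finset.mem_erase.2 ⟨hu₀ne, Finset.mem_univ _⟩, hu₀⟩
    have hts_le : ∀ t ∈ ts, t ≤ M := by
      intro t ht
      obtain ⟨u, hu, rfl⟩ := Finset.mem_image.1 (Finset.mem_filter.1 ((hmem_ts t).1 ht)).1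
      exact hub' u (Finset.mem_erase.1 hu).1
    set s' : List (Finset V × ℝ) := nested v m ts with hs'
    have hval' : ∀ e ∈ s', v ∈ e.1 ∧ 0 < e.2 := nested_valid v m ts hpair hpos_ts
    have hreal' : ∀ u : V, u ≠ v →
        ((s'.map (fun e => if u ∈ e.1 then e.2 else 0)).sum = m u) := by
      intro u hu
      rcases lt_or_eq_of_le (hm u) with hpos | hzero
      · have hmem : m u ∈ ts := by
          rw [hmem_ts]
          exact Finset.mem_filter.2
            ⟨Finset.mem_image.2 ⟨u, Finset.mem_erase.2 ⟨hu, Finset.mem_univ _⟩, rfl⟩, hpos⟩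
        exact nested_ifsum_mem m hu ts hpair hmem
      · rw [nested_ifsum_zero m hu ts (fun t ht => hzero ▸ hpos_ts t ht), hzero]
    -- the total rate of the nested strategy is M
    have hsnd' : (s'.map Prod.snd).sum = M := by
      obtain ⟨h, tl, hht⟩ := List.exists_cons_of_ne_nil (List.ne_nil_of_mem hMts)
      have hhM : h = M := by
        have h1 : h ≤ M := hts_le h (by rw [hht]; simp)
        have h2 : M ≤ h := by
          have hMts' := hMts
          rw [hht] at hMts'
          rcases List.mem_cons.1 hMts' with heq | hmem'
          · exact le_of_eq heq
          · have hpair' := hpair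
            rw [hht] at hpair'
            exact le_of_lt ((List.pairwise_cons.1 hpair').1 M hmem')
        exact le_antisymm h1 h2
      rw [hs', nested_snd_sum, hht, List.headD_cons, hhM]
    have hcost' : (s'.map (fun e => e.2 * (c * ((e.1.erase v).card : ℝ) + b))).sum =
        c * (∑ u ∈ Finset.univ.erase v, m u) + b * M := by
      rw [cost_eq v m b c s' hreal', hsnd']
    -- minimality gives rate ≤ M
    have hle := hmin s' hval' hreal'
    rw [hcost, hcost'] at hle
    have hrate_le : (s.map Prod.snd).sum ≤ M := le_of_mul_le_mul_left (by linarith) hb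
    -- rate ≥ M
    have hrate_ge : M ≤ (s.map Prod.snd).sum := by
      rw [← hu₀, ← hreal u₀ hu₀ne]
      apply List.sum_le_sum
      intro e he
      by_cases h : u₀ ∈ e.1
      · simp [h]
      · simp only [h, if_false]
        exact le_of_lt (hval e he).2
    exact le_antisymm hrate_le hrate_ge
end

section
/- Let G be a finite simple graph in which every vertex is incident to at most one 'bridge-like' edge, meaning: for every vertex v, there is at most one neighbor u of v such that u and v have no common neighbor. Then for every vertex v of degree d_v ≥ 2, the number of triangles containing v is at least (d_v − 1)/2. -/
/-- Number of triangles containing `v`: pairs of distinct neighbours of `v`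
that are adjacent to each other. -/
def triCount {V : Type*} [Fintype V] [DecidableEq V]
    (G : SimpleGraph V) [DecidableRel G.Adj] (v : V) : ℕ :=
  (((G.neighborFinset v).powersetCard 2).filter
    (fun p => ∀ x ∈ p, ∀ y ∈ p, x ≠ y → G.Adj x y)).card

/-- If in a finite simple graph every vertex has at most one neighbour
with which it shares no common neighbour, then every vertex of degree `d ≥ 2` is
contained in at least `(d - 1)/2` triangles. -/
theorem triangles_lower_bound {V : Type*} [Fintype V] [DecidableEq V]
    (G : SimpleGraph V) [DecidableRel G.Adj]
    (h : ∀ v u u' : V, G.Adj v u → G.Adj v u' →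
      (∀ w, ¬(G.Adj v w ∧ G.Adj u w)) → (∀ w, ¬(G.Adj v w ∧ G.Adj u' w)) → u = u')
    (v : V) (hd : 2 ≤ G.degree v) :
    ((G.degree v : ℝ) - 1) / 2 ≤ (triCount G v : ℝ) := by
  classical
  set S := G.neighborFinset v with hS
  set T := (S.powersetCard 2).filter
      (fun p => ∀ x ∈ p, ∀ y ∈ p, x ≠ y → G.Adj x y) with hT
  set B := S.filter (fun u => ∃ w, G.Adj v w ∧ G.Adj u w) with hB
  -- the "bad" set has at most one element
  have hbad : (S \ B).card ≤ 1 := by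
    apply Finset.card_le_one.mpr
    intro a ha b hb
    simp only [hB, Finset.mem_sdiff, Finset.mem_filter, not_and, not_exists] at ha hb
    have ha1 := ha.1
    have hb1 := hb.1
    rw [hS, SimpleGraph.mem_neighborFinset] at ha1 hb1
    refine h v a b ha1 hb1 ?_ ?_
    · intro w hw; exact (ha.2 ha.1) w hw.1 hw.2
    · intro w hw; exact (hb.2 hb.1) w hw.1 hw.2
  have hBsub : B ⊆ S := Finset.filter_subset _ _
  have hcard : S.card ≤ B.card + 1 := by
    have := Finset.card_sdiff_add_card_eq_card hBsub
    omega
  -- each good vertex maps to an edge in T containing it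
  have key : B.card ≤ 2 * T.card := by
    have hchoice : ∀ u ∈ B, ∃ w, G.Adj v w ∧ G.Adj u w := by
      intro u hu
      exact (Finset.mem_filter.mp hu).2
    choose f hf1 hf2 using hchoice
    have hmap : ∀ x : {u // u ∈ B}, ({x.1, f x.1 x.2} : Finset V) ∈ T := by
      intro ⟨u, hu⟩
      have huS : u ∈ S := hBsub hu
      have huv : G.Adj v u := by rwa [hS, SimpleGraph.mem_neighborFinset] at huS
      have hwS : f u hu ∈ S := by
        rw [hS, SimpleGraph.mem_neighborFinset]; exact hf1 u hu
      have hne : u ≠ f u hu := by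
        intro e
        have h2 := hf2 u hu
        rw [← e] at h2
        exact G.irrefl h2
      rw [hT, Finset.mem_filter, Finset.mem_powersetCard]
      refine ⟨⟨?_, ?_⟩, ?_⟩
      · intro x hx
        rcases Finset.mem_insert.mp hx with rfl | hx
        · exact huS
        · rw [Finset.mem_singleton.mp hx]; exact hwS
      · rw [Finset.card_insert_of_notMem (by simpa using hne), Finset.card_singleton]
      · intro x hx y hy hxy
        have hx' : x = u ∨ x = f u hu := by simpa using hx
        have hy' : y = u ∨ y = f u hu := by simpa using hy
        rcases hx' with h1 | h1 <;> rcases hy' with h2 | h2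
        · exact absurd (h1.trans h2.symm) hxy
        · rw [h1, h2]; exact hf2 u hu
        · rw [h1, h2]; exact (hf2 u hu).symm
        · exact absurd (h1.trans h2.symm) hxy
    calc B.card = B.attach.card := Finset.card_attach.symm
      _ ≤ 2 * T.card := by
          apply Finset.card_le_mul_card_image_of_maps_to
            (f := fun x : {u // u ∈ B} => ({x.1, f x.1 x.2} : Finset V))
            (fun x _ => hmap x)
          intro p hp
          have hp2 : p.card = 2 := by
            rw [hT, Finset.mem_filter, Finset.mem_powersetCard] at hp
            exact hp.1.2
          calc (Finset.filter (fun x => ({x.1, f x.1 x.2} : Finset V) = p)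
                  B.attach).card ≤ p.card := by
                apply Finset.card_le_card_of_injOn (fun x => x.1)
                · intro x hx
                  have := (Finset.mem_filter.mp hx).2
                  rw [← this]
                  exact Finset.mem_insert_self _ _
                · intro x _ y _ hxy
                  exact Subtype.ext hxy
            _ = 2 := hp2
  -- conclude over ℝ
  have hdeg : G.degree v = S.card := rfl
  have : G.degree v ≤ 2 * triCount G v + 1 := by
    have : triCount G v = T.card := rfl
    omega
  have h2 : (G.degree v : ℝ) ≤ 2 * (triCount G v : ℝ) + 1 := by
    exact_mod_cast this
  linarith
end

section
/- Let G be a finite simple graph and W = {v : d_v ≥ 2} nonempty. Suppose every vertex has at most one neighbor with which it shares no common neighbor. Then the clustering coefficient E(G) = (1/|W|) Σ_{v∈W} N_{v,△} / C(d_v, 2) satisfies E(G) ≥ 1/d̄_{G,W}, where d̄_{G,W} is the average degree over W and N_{v,△} is the number of triangles containing v. -/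
open Finset

lemma degree_le_two_tri_add_one {V : Type*} [Fintype V] [DecidableEq V]
    (G : SimpleGraph V) [DecidableRel G.Adj]
    (h : ∀ v u u' : V, G.Adj v u → G.Adj v u' →
      (∀ w, ¬(G.Adj v w ∧ G.Adj u w)) → (∀ w, ¬(G.Adj v w ∧ G.Adj u' w)) → u = u')
    (v : V) : G.degree v ≤ 2 * triCount G v + 1 := by
  classical
  set T := (((G.neighborFinset v).powersetCard 2).filter
    (fun p => ∀ x ∈ p, ∀ y ∈ p, x ≠ y → G.Adj x y)) with hT
  set S := (G.neighborFinset v).filter (fun u => ∃ w, G.Adj v w ∧ G.Adj u w) with hS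
  -- the complement has at most one element
  have hcompl : ((G.neighborFinset v) \ S).card ≤ 1 := by
    rw [Finset.card_le_one]
    intro a ha b hb
    simp only [hS, Finset.mem_sdiff, Finset.mem_filter, SimpleGraph.mem_neighborFinset,
      not_and, not_exists] at ha hb
    exact h v a b ha.1 hb.1 (fun w hw => ha.2 ha.1 w hw.1 hw.2) (fun w hw => hb.2 hb.1 w hw.1 hw.2)
  -- map each element of S to a triangle pair
  have hmap : S.card ≤ 2 * T.card := by
    set f : V → Finset V := fun u =>
      if hu : ∃ w, G.Adj v w ∧ G.Adj u w then {u, hu.choose} else ∅ with hf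
    have hmaps : ∀ u ∈ S, f u ∈ T := by
      intro u hu
      simp only [hS, Finset.mem_filter, SimpleGraph.mem_neighborFinset] at hu
      obtain ⟨huv, hex⟩ := hu
      have hw := hex.choose_spec
      set w := hex.choose
      have hne : u ≠ w := G.ne_of_adj hw.2
      have hfu : f u = {u, w} := by simp [hf, hex]; rfl
      rw [hfu, hT, Finset.mem_filter, Finset.mem_powersetCard]
      refine ⟨⟨?_, ?_⟩, ?_⟩
      · intro x hx
        rcases Finset.mem_insert.1 hx with rfl | hx
        · exact (SimpleGraph.mem_neighborFinset G v _).2 huv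
        · rw [Finset.mem_singleton] at hx
          subst hx
          exact (SimpleGraph.mem_neighborFinset G v _).2 hw.1
      · rw [Finset.card_insert_of_notMem (by simp [hne]), Finset.card_singleton]
      · intro x hx y hy hxy
        rcases Finset.mem_insert.1 hx with rfl | hx <;>
          rcases Finset.mem_insert.1 hy with rfl | hy
        · exact absurd rfl hxy
        · rw [Finset.mem_singleton] at hy; subst hy; exact hw.2
        · rw [Finset.mem_singleton] at hx; subst hx; exact hw.2.symm
        · rw [Finset.mem_singleton] at hx hy; subst hx; subst hy; exact absurd rfl hxy
    refine Finset.card_le_mul_card_image_of_maps_to hmaps 2 ?_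
    intro b hb
    have hbcard : b.card = 2 := by
      rw [hT, Finset.mem_filter, Finset.mem_powersetCard] at hb
      exact hb.1.2
    calc (S.filter (fun u => f u = b)).card ≤ b.card := by
          apply Finset.card_le_card
          intro u hu
          rw [Finset.mem_filter] at hu
          obtain ⟨huS, hub⟩ := hu
          rw [hS, Finset.mem_filter] at huS
          have : u ∈ f u := by simp [hf, huS.2]
          rwa [hub] at this
      _ = 2 := hbcard
  have hsplit := Finset.card_sdiff_add_card_eq_card
    (show S ⊆ G.neighborFinset v from Finset.filter_subset _ _)
  have hdeg : (G.neighborFinset v).card = G.degree v :=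
    SimpleGraph.card_neighborFinset_eq_degree G v
  have hmap' : S.card ≤ 2 * triCount G v := hmap
  omega

/-- If every vertex has at most one neighbour with which it shares no
common neighbour, then the clustering coefficient (averaged over the set `W` of vertices
of degree at least 2) is at least the reciprocal of the average degree over `W`. -/
theorem clustering_ge_inv_avg_degree {V : Type*} [Fintype V] [DecidableEq V]
    (G : SimpleGraph V) [DecidableRel G.Adj]
    (h : ∀ v u u' : V, G.Adj v u → G.Adj v u' →
      (∀ w, ¬(G.Adj v w ∧ G.Adj u w)) → (∀ w, ¬(G.Adj v w ∧ G.Adj u' w)) → u = u')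
    (W : Finset V) (hW : W = univ.filter (fun v => 2 ≤ G.degree v)) (hWne : W.Nonempty) :
    1 / ((∑ v ∈ W, (G.degree v : ℝ)) / (W.card : ℝ)) ≤
      (∑ v ∈ W, (triCount G v : ℝ) / ((G.degree v).choose 2 : ℝ)) / (W.card : ℝ) := by
  have hdeg : ∀ v ∈ W, 2 ≤ G.degree v := by
    intro v hv; rw [hW, Finset.mem_filter] at hv; exact hv.2
  -- pointwise bound : 1 / d_v ≤ tri / choose
  have hpt : ∀ v ∈ W, (1 : ℝ) / (G.degree v : ℝ) ≤
      (triCount G v : ℝ) / ((G.degree v).choose 2 : ℝ) := by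
    intro v hv
    have hd := hdeg v hv
    have htri := degree_le_two_tri_add_one G h v
    set d := G.degree v
    set t := triCount G v
    have hchoose : 2 * d.choose 2 = d * (d - 1) := by
      rw [Nat.choose_two_right]
      rw [Nat.mul_div_cancel']
      have : d - 1 + 1 = d := by omega
      have := Nat.even_mul_succ_self (d - 1)
      rw [Nat.sub_add_cancel (by omega)] at this
      rw [mul_comm]
      exact this.two_dvd
    have hkey : d.choose 2 ≤ t * d := by
      have h2 : 2 * d.choose 2 ≤ 2 * (t * d) := by
        rw [hchoose]
        calc d * (d - 1) = (d - 1) * d := mul_comm _ _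
          _ ≤ (2 * t) * d := Nat.mul_le_mul_right d (by omega)
          _ = 2 * (t * d) := by ring
      omega
    have hd0 : (0 : ℝ) < (d : ℝ) := by
      have : 0 < d := by omega
      exact_mod_cast this
    have hc0 : (0 : ℝ) < ((d.choose 2 : ℕ) : ℝ) := by
      exact_mod_cast Nat.choose_pos (by omega)
    rw [div_le_div_iff₀ hd0 hc0]
    have : ((d.choose 2 : ℕ) : ℝ) ≤ (t : ℝ) * (d : ℝ) := by exact_mod_cast hkey
    linarith
  have hcard : (0 : ℝ) < (W.card : ℝ) := by exact_mod_cast Finset.card_pos.2 hWne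
  have hD : (0 : ℝ) < ∑ v ∈ W, (G.degree v : ℝ) := by
    apply Finset.sum_pos _ hWne
    intro v hv
    have h2 := hdeg v hv
    have : 0 < G.degree v := by omega
    exact_mod_cast this
  have hCS : ((W.card : ℝ)) ^ 2 ≤
      (∑ v ∈ W, (G.degree v : ℝ)) * (∑ v ∈ W, 1 / (G.degree v : ℝ)) := by
    have := Finset.sum_sq_le_sum_mul_sum_of_sq_eq_mul W
      (r := fun _ => (1 : ℝ)) (f := fun v => (G.degree v : ℝ))
      (g := fun v => 1 / (G.degree v : ℝ))
      (fun i _ => by positivity) (fun i _ => by positivity)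
      (fun i hi => by
        have hd0 : (0 : ℝ) < (G.degree i : ℝ) := by
          have h2 := hdeg i hi
          have : 0 < G.degree i := by omega
          exact_mod_cast this
        field_simp)
    simpa using this
  have hsum : ∑ v ∈ W, 1 / (G.degree v : ℝ) ≤
      ∑ v ∈ W, (triCount G v : ℝ) / ((G.degree v).choose 2 : ℝ) :=
    Finset.sum_le_sum hpt
  rw [one_div_div, div_le_div_iff₀ hD hcard]
  nlinarith [hCS, hsum, hD, hcard]
end

section
/- In any stable event configuration of the social-event game with parameters a, b, c > 0 and γ = a/c, every invitation rate satisfies M^v_{v,u} < γ for all agents u ≠ v, and M^v_{v,u} > 0 implies u ∈ N_v (i.e., agents only invite those with whom they end up connected). -/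
open Finset

/-- An event configuration: each agent holds a finite list of events,
each event being a set of attendees together with a rate. -/
abbrev Config (V : Type*) := V → List (Finset V × ℝ)

section Game

variable {V : Type*} [Fintype V] [DecidableEq V]

/-- A valid strategy for `v`: every event contains `v` and has positive rate. -/
def ValidStrategy (v : V) (s : List (Finset V × ℝ)) : Prop :=
  ∀ e ∈ s, v ∈ e.1 ∧ 0 < e.2

def ConfigValid (cfg : Config V) : Prop := ∀ v, ValidStrategy v (cfg v)

/-- The meeting rate between `u` and `v` supported by `w` (rate of events held by `w`
attended by both `u` and `v`). -/
def rateBy (cfg : Config V) (w u v : V) : ℝ :=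
  ((cfg w).map (fun e => if u ∈ e.1 ∧ v ∈ e.1 then e.2 else 0)).sum

/-- The total meeting rate between `u` and `v`. -/
def meet (cfg : Config V) (u v : V) : ℝ := ∑ w, rateBy cfg w u v

/-- `u` and `v` are connected when their meeting rate is at least the threshold `1`. -/
def connected (cfg : Config V) (u v : V) : Prop := u ≠ v ∧ 1 ≤ meet cfg u v

open scoped Classical in
/-- The set of agents connected to `v`. -/
noncomputable def nbrs (cfg : Config V) (v : V) : Finset V :=
  univ.filter (fun u => connected cfg u v)

/-- The cost of strategy `s` for agent `v` with parameters `b, c`. -/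
def stratCost (b c : ℝ) (v : V) (s : List (Finset V × ℝ)) : ℝ :=
  (s.map (fun e => e.2 * (c * ((e.1.erase v).card : ℝ) + b))).sum

/-- Utility of agent `v`: benefit `a` per connection minus cost of own events. -/
noncomputable def utility (a b c : ℝ) (cfg : Config V) (v : V) : ℝ :=
  a * ((nbrs cfg v).card : ℝ) - stratCost b c v (cfg v)

/-- A configuration is stable when it is valid and is a Nash equilibrium:
no agent can strictly improve her utility by a unilateral change of strategy. -/
def Stable (a b c : ℝ) (cfg : Config V) : Prop :=
  ConfigValid cfg ∧ ∀ v (s : List (Finset V × ℝ)), ValidStrategy v s →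
    utility a b c (Function.update cfg v s) v ≤ utility a b c cfg v

/-- A configuration supports the graph `G` when adjacency coincides with connection. -/
def Supports (cfg : Config V) (G : SimpleGraph V) : Prop :=
  ∀ u v, G.Adj u v ↔ connected cfg u v

end Game

set_option linter.unusedSectionVars false

section Aux

variable {V : Type*} [Fintype V] [DecidableEq V]

/-- seat rate of `y` in a strategy list (for meetings with `v`). -/
def lSeat (v y : V) (s : List (Finset V × ℝ)) : ℝ :=
  (s.map (fun e => if y ∈ e.1 ∧ v ∈ e.1 then e.2 else 0)).sum

def lRate (s : List (Finset V × ℝ)) : ℝ := (s.map Prod.snd).sum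

lemma lSeat_nil (v y : V) : lSeat v y ([] : List (Finset V × ℝ)) = 0 := rfl

lemma lSeat_cons (v y : V) (e : Finset V × ℝ) (s : List (Finset V × ℝ)) :
    lSeat v y (e :: s) = (if y ∈ e.1 ∧ v ∈ e.1 then e.2 else 0) + lSeat v y s := by
  simp [lSeat]

lemma lSeat_append (v y : V) (s t : List (Finset V × ℝ)) :
    lSeat v y (s ++ t) = lSeat v y s + lSeat v y t := by
  simp [lSeat]

lemma lRate_append (s t : List (Finset V × ℝ)) :
    lRate (s ++ t) = lRate s + lRate t := by
  simp [lRate]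

lemma lSeat_nonneg (v y : V) (s : List (Finset V × ℝ)) (h : ∀ e ∈ s, 0 < e.2) :
    0 ≤ lSeat v y s := by
  apply List.sum_nonneg
  intro x hx
  obtain ⟨e, he, rfl⟩ := List.mem_map.mp hx
  split
  · exact (h e he).le
  · exact le_rfl

lemma rateBy_eq_lSeat (cfg : Config V) (w y v : V) :
    rateBy cfg w y v = lSeat v y (cfg w) := rfl

lemma lSeat_comm (v y : V) (s : List (Finset V × ℝ)) :
    lSeat v y s = lSeat y v s := by
  unfold lSeat
  congr 1
  apply List.map_congr_left
  intro e _
  exact if_congr and_comm rfl rfl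

lemma lSeat_le_lRate (v y : V) (s : List (Finset V × ℝ)) (h : ∀ e ∈ s, 0 < e.2) :
    lSeat v y s ≤ lRate s := by
  apply List.sum_le_sum
  intro e he
  split
  · exact le_rfl
  · exact (h e he).le

lemma lRate_eq_lSeat (v y : V) (s : List (Finset V × ℝ))
    (h : ∀ e ∈ s, y ∈ e.1 ∧ v ∈ e.1) : lSeat v y s = lRate s := by
  unfold lSeat lRate
  congr 1
  apply List.map_congr_left
  intro e he
  rw [if_pos (h e he)]

/-- splitting a map-sum along a filter -/
lemma sum_map_filter_split {α : Type*} (l : List α) (p : α → Bool) (f : α → ℝ) :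
    (l.map f).sum = ((l.filter p).map f).sum + ((l.filter (fun a => !(p a))).map f).sum := by
  induction l with
  | nil => simp
  | cons e l ih =>
    by_cases h : p e <;> simp [List.filter_cons, h, ih] <;> ring

lemma lSeat_filter_split (v y : V) (l : List (Finset V × ℝ)) (p : Finset V × ℝ → Bool) :
    lSeat v y l = lSeat v y (l.filter p) + lSeat v y (l.filter (fun a => !(p a))) :=
  sum_map_filter_split l p _

lemma lRate_filter_split (l : List (Finset V × ℝ)) (p : Finset V × ℝ → Bool) :
    lRate l = lRate (l.filter p) + lRate (l.filter (fun a => !(p a))) :=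
  sum_map_filter_split l p _

/-- the fundamental cost decomposition -/
lemma stratCost_eq_seat (b c : ℝ) (v : V) (s : List (Finset V × ℝ))
    (hv : ∀ e ∈ s, v ∈ e.1) :
    stratCost b c v s = c * ∑ y ∈ univ.erase v, lSeat v y s + b * lRate s := by
  induction s with
  | nil => simp [stratCost, lRate, lSeat]
  | cons e s ih =>
    have hve : v ∈ e.1 := (hv e (List.mem_cons_self))
    have hs : ∀ e' ∈ s, v ∈ e'.1 := fun e' he' => hv e' (List.mem_cons_of_mem e he')
    have hfil : e.1.erase v = (univ.erase v).filter (· ∈ e.1) := by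
      ext z; simp [Finset.mem_erase, and_comm]
    have hcard : ((e.1.erase v).card : ℝ)
        = ∑ y ∈ univ.erase v, (if y ∈ e.1 ∧ v ∈ e.1 then (1 : ℝ) else 0) := by
      rw [hfil, Finset.card_filter]
      push_cast
      apply Finset.sum_congr rfl
      intro y _
      by_cases hy : y ∈ e.1 <;> simp [hy, hve]
    have hsum : ∑ y ∈ univ.erase v, (if y ∈ e.1 ∧ v ∈ e.1 then e.2 else 0)
        = e.2 * ((e.1.erase v).card : ℝ) := by
      rw [hcard, Finset.mul_sum]
      apply Finset.sum_congr rfl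
      intro y _
      rw [mul_ite, mul_one, mul_zero]
    have h1 : stratCost b c v (e :: s)
        = e.2 * (c * ((e.1.erase v).card : ℝ) + b) + stratCost b c v s := by
      simp [stratCost]
    have h2 : lRate (e :: s) = e.2 + lRate s := by simp [lRate]
    rw [h1, h2, ih hs]
    have h3 : ∑ y ∈ univ.erase v, lSeat v y (e :: s)
        = ∑ y ∈ univ.erase v, ((if y ∈ e.1 ∧ v ∈ e.1 then e.2 else 0) + lSeat v y s) :=
      Finset.sum_congr rfl (fun y _ => lSeat_cons v y e s)
    rw [h3, Finset.sum_add_distrib, hsum]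
    ring

/-- meeting rates after a unilateral update -/
lemma meet_update (cfg : Config V) (v : V) (s : List (Finset V × ℝ)) (y : V) :
    meet (Function.update cfg v s) y v = meet cfg y v - lSeat v y (cfg v) + lSeat v y s := by
  unfold meet
  have h1 : ∀ w, rateBy (Function.update cfg v s) w y v
      = Function.update (fun w => rateBy cfg w y v) v (lSeat v y s) w := by
    intro w
    by_cases hw : w = v
    · subst hw; simp [rateBy_eq_lSeat, Function.update_self]
    · simp [rateBy_eq_lSeat, Function.update_of_ne hw]
  rw [Finset.sum_congr rfl (fun w _ => h1 w),
    Finset.sum_update_of_mem (Finset.mem_univ v),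
    Finset.sum_eq_sum_sdiff_singleton_add (Finset.mem_univ v) (fun w => rateBy cfg w y v)]
  rw [rateBy_eq_lSeat]
  ring

end Aux

section Comp

variable {V : Type*} [Fintype V] [DecidableEq V]

/-- nested "layer" events seating each `y ∈ Cf` at total rate `m y`. -/
noncomputable def compL (v : V) (m : V → ℝ) (Cf : Finset V) : ℝ → List ℝ → List (Finset V × ℝ)
  | _, [] => []
  | t, x :: xs => (insert v (Cf.filter fun y => x ≤ m y), x - t) :: compL v m Cf x xs

@[simp] lemma compL_nil (v : V) (m : V → ℝ) (Cf : Finset V) (t : ℝ) :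
    compL v m Cf t [] = [] := rfl

@[simp] lemma compL_cons (v : V) (m : V → ℝ) (Cf : Finset V) (t x : ℝ) (xs : List ℝ) :
    compL v m Cf t (x :: xs)
      = (insert v (Cf.filter fun y => x ≤ m y), x - t) :: compL v m Cf x xs := rfl

lemma compL_valid (v : V) (m : V → ℝ) (Cf : Finset V) :
    ∀ (t : ℝ) (l : List ℝ), (t :: l).Pairwise (· < ·) →
      ∀ e ∈ compL v m Cf t l, v ∈ e.1 ∧ 0 < e.2 := by
  intro t l
  induction l generalizing t with
  | nil => intro _ e he; simp at he
  | cons x xs ih =>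
    intro hpw e he
    rw [compL_cons] at he
    rcases List.mem_cons.mp he with rfl | h
    · exact ⟨Finset.mem_insert_self v _, sub_pos.mpr ((List.pairwise_cons.mp hpw).1 x (List.mem_cons_self))⟩
    · exact ih x ((List.pairwise_cons.mp hpw).2) e h

lemma compL_rate (v : V) (m : V → ℝ) (Cf : Finset V) :
    ∀ (t : ℝ) (l : List ℝ), lRate (compL v m Cf t l) = l.getLastD t - t := by
  intro t l
  induction l generalizing t with
  | nil => simp [lRate]
  | cons x xs ih =>
    rw [compL_cons, List.getLastD_cons]
    have : lRate ((insert v (Cf.filter fun y => x ≤ m y), x - t) :: compL v m Cf x xs)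
        = (x - t) + lRate (compL v m Cf x xs) := by simp [lRate]
    rw [this, ih x]
    ring

lemma compL_seat_zero_of_not_mem (v : V) (m : V → ℝ) (Cf : Finset V) (y : V)
    (hy : y ∉ Cf) (hyv : y ≠ v) :
    ∀ (t : ℝ) (l : List ℝ), lSeat v y (compL v m Cf t l) = 0 := by
  intro t l
  induction l generalizing t with
  | nil => simp [lSeat]
  | cons x xs ih =>
    rw [compL_cons, lSeat_cons, ih x]
    have : y ∉ (insert v (Cf.filter fun z => x ≤ m z)) := by
      simp [hyv, hy]
    simp [this]

lemma compL_seat_zero_of_lt (v : V) (m : V → ℝ) (Cf : Finset V) (y : V) (hyv : y ≠ v) :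
    ∀ (t : ℝ) (l : List ℝ), (∀ x ∈ l, m y < x) → lSeat v y (compL v m Cf t l) = 0 := by
  intro t l
  induction l generalizing t with
  | nil => simp [lSeat]
  | cons x xs ih =>
    intro hlt
    rw [compL_cons, lSeat_cons, ih x (fun z hz => hlt z (List.mem_cons_of_mem x hz))]
    have : y ∉ (insert v (Cf.filter fun z => x ≤ m z)) := by
      simp only [Finset.mem_insert, Finset.mem_filter, not_or]
      exact ⟨hyv, fun h => absurd h.2 (not_le.mpr (hlt x (List.mem_cons_self)))⟩
    simp [this]

lemma compL_seat_eq (v : V) (m : V → ℝ) (Cf : Finset V) (y : V)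
    (hy : y ∈ Cf) (hyv : y ≠ v) :
    ∀ (t : ℝ) (l : List ℝ), (t :: l).Pairwise (· < ·) → m y ∈ l →
      lSeat v y (compL v m Cf t l) = m y - t := by
  intro t l
  induction l generalizing t with
  | nil => intro _ h; simp at h
  | cons x xs ih =>
    intro hpw hmem
    have hpw' : (x :: xs).Pairwise (· < ·) := (List.pairwise_cons.mp hpw).2
    rw [compL_cons, lSeat_cons]
    rcases List.mem_cons.mp hmem with h | h
    · -- m y = x
      have hmemb : y ∈ insert v (Cf.filter fun z => x ≤ m z) :=
        Finset.mem_insert_of_mem (Finset.mem_filter.mpr ⟨hy, le_of_eq h.symm⟩)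
      rw [if_pos ⟨hmemb, Finset.mem_insert_self v _⟩]
      rw [compL_seat_zero_of_lt v m Cf y hyv x xs
        (fun z hz => h ▸ (List.pairwise_cons.mp hpw').1 z hz)]
      rw [h]; ring
    · have hxy : x < m y := (List.pairwise_cons.mp hpw').1 _ h
      have hmemb : y ∈ insert v (Cf.filter fun z => x ≤ m z) :=
        Finset.mem_insert_of_mem (Finset.mem_filter.mpr ⟨hy, hxy.le⟩)
      rw [if_pos ⟨hmemb, Finset.mem_insert_self v _⟩, ih x hpw' h]
      ring

lemma getLastD_cases {l : List ℝ} {t : ℝ} : l.getLastD t = t ∨ l.getLastD t ∈ l := by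
  induction l generalizing t with
  | nil => left; rfl
  | cons x xs ih =>
    rw [List.getLastD_cons]
    rcases @ih x with h | h
    · right; rw [h]; exact List.mem_cons_self
    · right; exact List.mem_cons_of_mem x h

end Comp

section Main

variable {V : Type*} [Fintype V] [DecidableEq V]

lemma funded_connected (a b c : ℝ) (hc : 0 < c) (cfg : Config V) (hst : Stable a b c cfg)
    (v u : V) (hvu : u ≠ v) (hr : 0 < rateBy cfg v v u) : u ∈ nbrs cfg v := by
  obtain ⟨hval, hstab⟩ := hst
  by_contra hu
  set L := cfg v with hL
  set s₂ := L.map (fun e => (e.1.erase u, e.2)) with hs₂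
  have hvalid : ValidStrategy v s₂ := by
    intro e he
    obtain ⟨e', he', rfl⟩ := List.mem_map.mp he
    exact ⟨Finset.mem_erase.mpr ⟨Ne.symm hvu, (hval v e' he').1⟩, (hval v e' he').2⟩
  have hseat : ∀ y, y ≠ u → lSeat v y s₂ = lSeat v y L := by
    intro y hy
    unfold lSeat
    rw [hs₂, List.map_map]
    congr 1
    apply List.map_congr_left
    intro e _
    apply if_congr _ rfl rfl
    simp [Finset.mem_erase, hy, Ne.symm hvu]
  have hseatu : lSeat v u s₂ = 0 := by
    unfold lSeat
    rw [hs₂, List.map_map]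
    apply List.sum_eq_zero
    intro x hx
    obtain ⟨e, he, rfl⟩ := List.mem_map.mp hx
    simp [Finset.mem_erase]
  have hrate : lRate s₂ = lRate L := by
    unfold lRate
    rw [hs₂, List.map_map]
    rfl
  have hmeet : ∀ y, y ≠ u → meet (Function.update cfg v s₂) y v = meet cfg y v := by
    intro y hy
    rw [meet_update, hseat y hy]
    ring
  have hN : nbrs (Function.update cfg v s₂) v = nbrs cfg v := by
    ext y
    by_cases hy : y = u
    · subst hy
      have h1 : y ∉ nbrs cfg v := hu
      simp only [nbrs, Finset.mem_filter, Finset.mem_univ, true_and] at h1 ⊢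
      constructor
      · intro hcon
        exfalso
        apply h1
        refine ⟨hvu, ?_⟩
        have h2 := hcon.2
        rw [meet_update, hseatu] at h2
        have h0 : 0 ≤ lSeat v y L := lSeat_nonneg v y L (fun e he => (hval v e he).2)
        linarith
      · intro hcon
        exact absurd hcon h1
    · simp only [nbrs, Finset.mem_filter, Finset.mem_univ, true_and]
      simp only [connected, hmeet y hy]
  have hvL : ∀ e ∈ L, v ∈ e.1 := fun e he => (hval v e he).1
  have hvS : ∀ e ∈ s₂, v ∈ e.1 := fun e he => (hvalid e he).1
  have hsum : ∑ y ∈ univ.erase v, lSeat v y L - ∑ y ∈ univ.erase v, lSeat v y s₂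
      = lSeat v u L := by
    rw [← Finset.sum_sub_distrib,
      Finset.sum_eq_single_of_mem u (Finset.mem_erase.mpr ⟨hvu, Finset.mem_univ u⟩)]
    · rw [hseatu]; ring
    · intro y _ hy; rw [hseat y hy]; ring
  have hcL := stratCost_eq_seat b c v L hvL
  have hcS := stratCost_eq_seat b c v s₂ hvS
  have hle := hstab v s₂ hvalid
  rw [utility, utility, Function.update_self, hN] at hle
  have hρ : rateBy cfg v v u = lSeat v u L := by
    rw [show rateBy cfg v v u = lSeat u v L from rfl, lSeat_comm]
  have hpos : 0 < c * lSeat v u L := mul_pos hc (hρ ▸ hr)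
  have : stratCost b c v L - stratCost b c v s₂ = c * lSeat v u L := by
    rw [hcL, hcS, hrate]
    have := hsum
    nlinarith [hsum]
  linarith

lemma rate_lt (a b c : ℝ) (ha : 0 < a) (hb : 0 < b) (hc : 0 < c)
    (cfg : Config V) (hst : Stable a b c cfg)
    (v u : V) (hvu : u ≠ v) : rateBy cfg v v u < a / c := by
  obtain ⟨hval, hstab⟩ := hst
  by_contra hge
  push_neg at hge
  set L := cfg v with hL
  have hLval : ∀ e ∈ L, v ∈ e.1 ∧ 0 < e.2 := hval v
  set p : Finset V × ℝ → Bool := fun e => decide (u ∈ e.1) with hp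
  set Ld := L.filter p with hLd
  set Lk := L.filter (fun e => !(p e)) with hLk
  have hLdmem : ∀ e ∈ Ld, u ∈ e.1 ∧ v ∈ e.1 ∧ 0 < e.2 := by
    intro e he
    have h1 := List.mem_filter.mp he
    exact ⟨of_decide_eq_true h1.2, (hLval e h1.1).1, (hLval e h1.1).2⟩
  have hLkmem : ∀ e ∈ Lk, u ∉ e.1 ∧ v ∈ e.1 ∧ 0 < e.2 := by
    intro e he
    have h1 := List.mem_filter.mp he
    refine ⟨?_, (hLval e h1.1).1, (hLval e h1.1).2⟩
    have := h1.2
    simp [hp] at this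
    exact this
  set m : V → ℝ := fun y => lSeat v y Ld with hm
  have hmy : ∀ y, m y = lSeat v y Ld := fun y => rfl
  set M := m u with hMdef
  -- basic facts about M and m
  have hseatk0 : lSeat v u Lk = 0 := by
    apply List.sum_eq_zero
    intro x hx
    obtain ⟨e, he, rfl⟩ := List.mem_map.mp hx
    rw [if_neg]
    exact fun hcon => (hLkmem e he).1 hcon.1
  have hLsplit : ∀ y, lSeat v y L = m y + lSeat v y Lk := by
    intro y
    rw [hmy]
    exact lSeat_filter_split v y L p
  have hMrate : rateBy cfg v v u = M := by
    rw [show rateBy cfg v v u = lSeat u v L from rfl, lSeat_comm, hLsplit u, hseatk0, hMdef]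
    ring
  have hγ : 0 < a / c := div_pos ha hc
  have hMpos : 0 < M := lt_of_lt_of_le hγ (hMrate ▸ hge)
  have haM : a ≤ c * M := by
    rw [mul_comm]
    exact (div_le_iff₀ hc).mp (hMrate ▸ hge)
  have hmnonneg : ∀ y, 0 ≤ m y := by
    intro y
    rw [hmy]
    exact lSeat_nonneg v y Ld (fun e he => (hLdmem e he).2.2)
  have hRd : lRate Ld = M := by
    rw [hMdef, hmy]
    exact (lRate_eq_lSeat v u Ld (fun e he => ⟨(hLdmem e he).1, (hLdmem e he).2.1⟩)).symm
  have hmle : ∀ y, m y ≤ M := by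
    intro y
    rw [hmy, ← hRd]
    exact lSeat_le_lRate v y Ld (fun e he => (hLdmem e he).2.2)
  have hmv : m v = M := by
    rw [← hRd, hmy]
    exact lRate_eq_lSeat v v Ld (fun e he => ⟨(hLdmem e he).2.1, (hLdmem e he).2.1⟩)
  -- the set C of partially funded guests and the sorted value list
  set C : Finset V := univ.filter (fun y => y ≠ u ∧ 0 < m y ∧ m y < M) with hC
  have hCmem : ∀ y ∈ C, y ≠ u ∧ 0 < m y ∧ m y < M := by
    intro y hy
    simpa using (Finset.mem_filter.mp hy).2
  have hvC : v ∉ C := by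
    intro h
    exact absurd (hCmem v h).2.2 (by rw [hmv]; exact lt_irrefl M)
  have huC : u ∉ C := by
    intro h
    exact (hCmem u h).1 rfl
  set l : List ℝ := (C.image m).sort (· ≤ ·) with hl
  have hlmem : ∀ x ∈ l, ∃ y ∈ C, m y = x := by
    intro x hx
    rw [hl, Finset.mem_sort] at hx
    exact Finset.mem_image.mp hx
  have hpw : (0 :: l).Pairwise (· < ·) := by
    rw [List.pairwise_cons]
    refine ⟨?_, (Finset.sortedLT_sort _).pairwise⟩
    intro x hx
    obtain ⟨y, hy, rfl⟩ := hlmem x hx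
    exact (hCmem y hy).2.1
  set comp := compL v m C 0 l with hcomp
  set s' := Lk ++ comp with hs'
  have hvalid' : ValidStrategy v s' := by
    intro e he
    rcases List.mem_append.mp he with h | h
    · exact ⟨(hLkmem e h).2.1, (hLkmem e h).2.2⟩
    · exact compL_valid v m C 0 l hpw e h
  set maxv := l.getLastD 0 with hmaxv
  have hmaxlt : maxv < M := by
    rcases getLastD_cases (l := l) (t := 0) with h | h
    · rw [hmaxv, h]; exact hMpos
    · obtain ⟨y, hy, hh⟩ := hlmem _ h
      rw [hmaxv, ← hh]
      exact (hCmem y hy).2.2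
  -- seats provided by comp
  have hseatC : ∀ y ∈ C, lSeat v y comp = m y := by
    intro y hy
    have hyv : y ≠ v := fun h => hvC (h ▸ hy)
    have hmem : m y ∈ l := by
      rw [hl, Finset.mem_sort]
      exact Finset.mem_image_of_mem m hy
    rw [hcomp, compL_seat_eq v m C y hy hyv 0 l hpw hmem, sub_zero]
  have hseat0 : ∀ y, y ∉ C → y ≠ v → lSeat v y comp = 0 := fun y hy hyv =>
    compL_seat_zero_of_not_mem v m C y hy hyv 0 l
  -- the set of dropped (fully funded) guests
  set U := univ.erase v with hU
  set D : Finset V := U.filter (fun y => y ∉ C ∧ m y ≠ 0) with hD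
  have hDM : ∀ y ∈ D, m y = M := by
    intro y hy
    have h1 := Finset.mem_filter.mp hy
    obtain ⟨hyC, hym⟩ := h1.2
    by_cases hyu : y = u
    · rw [hyu, hMdef]
    · have h2 : 0 < m y := lt_of_le_of_ne (hmnonneg y) (Ne.symm hym)
      have h3 : ¬(m y < M) := by
        intro hlt
        exact hyC (Finset.mem_filter.mpr ⟨Finset.mem_univ y, hyu, h2, hlt⟩)
      exact le_antisymm (hmle y) (not_lt.mp h3)
  have huD : u ∈ D := by
    rw [hD]
    refine Finset.mem_filter.mpr ⟨Finset.mem_erase.mpr ⟨hvu, Finset.mem_univ u⟩, huC, ?_⟩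
    rw [← hMdef]
    exact hMpos.ne'
  have hCU : C ⊆ U := fun y hy =>
    Finset.mem_erase.mpr ⟨fun h => hvC (h ▸ hy), Finset.mem_univ y⟩
  -- key sums
  have hS1 : ∑ y ∈ U, lSeat v y comp = ∑ y ∈ C, m y := by
    rw [← Finset.sum_subset hCU
      (fun y hyU hyC => hseat0 y hyC (Finset.mem_erase.mp hyU).1)]
    exact Finset.sum_congr rfl (fun y hy => hseatC y hy)
  have hS2 : ∑ y ∈ U, m y = ∑ y ∈ C, m y + M * D.card := by
    rw [← Finset.sum_sdiff hCU]
    have hDsub : D ⊆ U \ C := by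
      intro y hy
      have h1 := Finset.mem_filter.mp hy
      exact Finset.mem_sdiff.mpr ⟨h1.1, h1.2.1⟩
    have h2 : ∑ y ∈ U \ C, m y = ∑ y ∈ D, m y := by
      symm
      apply Finset.sum_subset hDsub
      intro y hyUC hyD
      by_contra hym
      exact hyD (Finset.mem_filter.mpr ⟨(Finset.mem_sdiff.mp hyUC).1,
        (Finset.mem_sdiff.mp hyUC).2, hym⟩)
    have h3 : ∑ y ∈ D, m y = M * D.card := by
      rw [Finset.sum_congr rfl (fun y hy => hDM y hy), Finset.sum_const, nsmul_eq_mul]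
      ring
    rw [h2, h3]
    ring
  have hRsplit : lRate L = M + lRate Lk := by
    rw [← hRd]
    exact lRate_filter_split L p
  -- cost computation
  have hcL := stratCost_eq_seat b c v L (fun e he => (hLval e he).1)
  have hcS := stratCost_eq_seat b c v s' (fun e he => (hvalid' e he).1)
  have hseatS : ∀ y, lSeat v y s' = lSeat v y Lk + lSeat v y comp := fun y =>
    lSeat_append v y Lk comp
  have hRS : lRate s' = lRate Lk + maxv := by
    rw [hs', lRate_append, hcomp, compL_rate, hmaxv, sub_zero]
  have hcost : stratCost b c v L - stratCost b c v s' = c * (M * D.card) + b * (M - maxv) := by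
    rw [hcL, hcS]
    have e1 : ∑ y ∈ U, lSeat v y L = ∑ y ∈ U, m y + ∑ y ∈ U, lSeat v y Lk := by
      rw [← Finset.sum_add_distrib]
      exact Finset.sum_congr rfl (fun y _ => hLsplit y)
    have e2 : ∑ y ∈ U, lSeat v y s' = ∑ y ∈ U, lSeat v y Lk + ∑ y ∈ C, m y := by
      rw [← hS1, ← Finset.sum_add_distrib]
      exact Finset.sum_congr rfl (fun y _ => hseatS y)
    rw [hU] at e1 e2
    rw [e1, e2, hS2, hRsplit, hRS]
    ring
  -- neighbours are preserved off D
  set cfg' := Function.update cfg v s' with hcfg'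
  have hmeet' : ∀ y, y ≠ v → y ∉ D → meet cfg' y v = meet cfg y v := by
    intro y hyv hyD
    have hyU : y ∈ U := Finset.mem_erase.mpr ⟨hyv, Finset.mem_univ y⟩
    rw [hcfg', meet_update, hseatS y, hLsplit y]
    by_cases hyC : y ∈ C
    · rw [hseatC y hyC]
      ring
    · have hy0 : m y = 0 := by
        by_contra hym
        exact hyD (Finset.mem_filter.mpr ⟨hyU, hyC, hym⟩)
      rw [hseat0 y hyC hyv, hy0]
      ring
  have hsubN : nbrs cfg v ⊆ nbrs cfg' v ∪ D := by
    intro y hy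
    have hcon : connected cfg y v := by
      simpa [nbrs] using hy
    by_cases hyD : y ∈ D
    · exact Finset.mem_union_right _ hyD
    · apply Finset.mem_union_left
      simp only [nbrs, Finset.mem_filter, Finset.mem_univ, true_and]
      exact ⟨hcon.1, by rw [hmeet' y hcon.1 hyD]; exact hcon.2⟩
  have hcard : (nbrs cfg v).card ≤ (nbrs cfg' v).card + D.card :=
    le_trans (Finset.card_le_card hsubN) (Finset.card_union_le _ _)
  -- the contradiction
  have hle := hstab v s' hvalid'
  rw [utility, utility, Function.update_self, ← hcfg'] at hle
  have h1 : ((nbrs cfg v).card : ℝ) ≤ ((nbrs cfg' v).card : ℝ) + (D.card : ℝ) := by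
    exact_mod_cast hcard
  have h2 : 0 < b * (M - maxv) := mul_pos hb (by linarith)
  have h3 : a * (D.card : ℝ) ≤ c * (M * D.card) := by
    have h4 : (0:ℝ) ≤ (D.card : ℝ) := Nat.cast_nonneg _
    nlinarith
  have h5 : a * ((nbrs cfg v).card : ℝ)
      ≤ a * ((nbrs cfg' v).card : ℝ) + a * (D.card : ℝ) := by
    nlinarith
  rw [← hL] at hle
  linarith

end Main


/-- In any stable configuration, every invitation rate is strictly below
`γ = a/c`, and an agent only invites (at positive rate) those with whom she ends up
connected. -/
theorem stable_invitation_rates {V : Type*} [Fintype V] [DecidableEq V]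
    (a b c : ℝ) (ha : 0 < a) (hb : 0 < b) (hc : 0 < c)
    (cfg : Config V) (hst : Stable a b c cfg) :
    ∀ v u : V, u ≠ v →
      rateBy cfg v v u < a / c ∧ (0 < rateBy cfg v v u → u ∈ nbrs cfg v) := by
  intro v u hvu
  exact ⟨rate_lt a b c ha hb hc cfg hst v u hvu,
    fun hr => funded_connected a b c hc cfg hst v u hvu hr⟩
end

section
/- Let H be a strong subgraph on ℓ vertices of the network supported by a stable configuration (i.e., H is a subgraph and for all u,v ∈ H, all common neighbors of u and v lie in H). If γ ≤ 1/ℓ, then H contains no edges. In particular, K_ℓ can be a strong subgraph of a supportable network only if γ > 1/ℓ. -/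
open Finset

/-! ### Auxiliary list lemmas -/

private lemma aux_sum_map_sub {α : Type*} (l : List α) (f g : α → ℝ) :
    (l.map fun e => f e - g e).sum = (l.map f).sum - (l.map g).sum := by
  induction l with
  | nil => simp
  | cons h t ih => simp only [List.map_cons, List.sum_cons, ih]; ring

private lemma aux_sum_map_add {α : Type*} (l : List α) (f g : α → ℝ) :
    (l.map fun e => f e + g e).sum = (l.map f).sum + (l.map g).sum := by
  induction l with
  | nil => simp
  | cons h t ih => simp only [List.map_cons, List.sum_cons, ih]; ring

private lemma aux_sum_map_mul {α : Type*} (l : List α) (r : ℝ) (f : α → ℝ) :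
    (l.map fun e => r * f e).sum = r * (l.map f).sum := by
  induction l with
  | nil => simp
  | cons h t ih => simp only [List.map_cons, List.sum_cons, ih]; ring

private lemma aux_swap {V α : Type*} [DecidableEq V] (L : Finset V) (l : List α)
    (f : V → α → ℝ) :
    ∑ x ∈ L, (l.map (f x)).sum = (l.map fun e => ∑ x ∈ L, f x e).sum := by
  induction l with
  | nil => simp
  | cons h t ih => simp [Finset.sum_add_distrib, ih]

private lemma aux_erase_comm {V : Type*} [DecidableEq V] (s : Finset V) (x w : V) :
    (s.erase x).erase w = (s.erase w).erase x := by
  ext y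
  simp only [Finset.mem_erase]
  tauto

/-! ### Basic facts about rates -/

section Facts

variable {V : Type*} [Fintype V] [DecidableEq V]

private lemma rateBy_nonneg {cfg : Config V} (hv : ConfigValid cfg) (w u v : V) :
    0 ≤ rateBy cfg w u v := by
  apply List.sum_nonneg
  intro t ht
  obtain ⟨e, he, rfl⟩ := List.mem_map.1 ht
  split
  · exact (hv w e he).2.le
  · exact le_refl 0

private lemma rateBy_symm (cfg : Config V) (w u v : V) :
    rateBy cfg w u v = rateBy cfg w v u := by
  simp [rateBy, and_comm]

private lemma rateBy_le_host {cfg : Config V} (hv : ConfigValid cfg) (w u v : V) :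
    rateBy cfg w u v ≤ rateBy cfg w w u := by
  apply List.sum_le_sum
  intro e he
  by_cases h : u ∈ e.1 ∧ v ∈ e.1
  · rw [if_pos h, if_pos ⟨(hv w e he).1, h.1⟩]
  · rw [if_neg h]
    split
    · exact (hv w e he).2.le
    · exact le_refl 0

private lemma meet_symm (cfg : Config V) (u v : V) : meet cfg u v = meet cfg v u := by
  unfold meet
  exact Finset.sum_congr rfl fun w _ => rateBy_symm cfg w u v

private lemma connected_symm {cfg : Config V} {u v : V} (h : connected cfg u v) :
    connected cfg v u := ⟨h.1.symm, (meet_symm cfg v u) ▸ h.2⟩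

/-- The key deviation lemma: removing attendee `x` from all of `w`'s events.
Gives the bound `c * M ≤ a` and that rates towards non-neighbours vanish. -/
private lemma removal {a b c : ℝ} (ha : 0 < a) (hc : 0 < c) {cfg : Config V}
    (hst : Stable a b c cfg) {w x : V} (hxw : x ≠ w) :
    c * rateBy cfg w w x ≤ a ∧ (¬ connected cfg x w → rateBy cfg w w x = 0) := by
  have hval : ConfigValid cfg := hst.1
  set s' : List (Finset V × ℝ) := (cfg w).map (fun e => (e.1.erase x, e.2)) with hs'
  have hvalid' : ValidStrategy w s' := by
    intro e he
    obtain ⟨f, hf, rfl⟩ := List.mem_map.1 he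
    exact ⟨Finset.mem_erase.2 ⟨hxw.symm, (hval w f hf).1⟩, (hval w f hf).2⟩
  set cfg' := Function.update cfg w s' with hcfg'
  have hcfgw : cfg' w = s' := Function.update_self w s' cfg
  -- cost of the new strategy
  have hcost : stratCost b c w s' = stratCost b c w (cfg w) - c * rateBy cfg w w x := by
    unfold stratCost rateBy
    rw [hs', List.map_map, ← aux_sum_map_mul (cfg w) c, ← aux_sum_map_sub]
    congr 1
    apply List.map_congr_left
    intro e he
    have hw : w ∈ e.1 := (hval w e he).1
    simp only [Function.comp]
    rw [aux_erase_comm]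
    by_cases hx : x ∈ e.1
    · have hx' : x ∈ e.1.erase w := Finset.mem_erase.2 ⟨hxw, hx⟩
      rw [Finset.cast_card_erase_of_mem hx', if_pos ⟨hw, hx⟩]
      ring
    · have hx' : x ∉ e.1.erase w := fun h => hx (Finset.mem_of_mem_erase h)
      rw [Finset.erase_eq_of_notMem hx', if_neg (fun h => hx h.2)]
      ring
  -- rates by other hosts are unchanged
  have hrate_other : ∀ h : V, h ≠ w → ∀ p q, rateBy cfg' h p q = rateBy cfg h p q := by
    intro h hne p q
    unfold rateBy
    rw [hcfg', Function.update_of_ne hne]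
  -- rates by `w` are unchanged for pairs avoiding `x`
  have hrate_w : ∀ p q, p ≠ x → q ≠ x → rateBy cfg' w p q = rateBy cfg w p q := by
    intro p q hp hq
    unfold rateBy
    rw [hcfgw, hs', List.map_map]
    congr 1
    apply List.map_congr_left
    intro e _
    simp [Function.comp, Finset.mem_erase, hp, hq]
  -- meets avoiding `x` are unchanged
  have hmeet : ∀ p q, p ≠ x → q ≠ x → meet cfg' p q = meet cfg p q := by
    intro p q hp hq
    unfold meet
    apply Finset.sum_congr rfl
    intro h _
    rcases eq_or_ne h w with rfl | hh
    · exact hrate_w p q hp hq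
    · exact hrate_other h hh p q
  -- the meet with `x` only decreases
  have hmeetx : meet cfg' x w ≤ meet cfg x w := by
    unfold meet
    apply Finset.sum_le_sum
    intro h _
    rcases eq_or_ne h w with rfl | hh
    · have : rateBy cfg' h x h = 0 := by
        unfold rateBy
        rw [hcfgw, hs', List.map_map]
        apply List.sum_eq_zero
        intro t ht
        obtain ⟨e, _, rfl⟩ := List.mem_map.1 ht
        simp [Function.comp]
      rw [this]
      exact rateBy_nonneg hval h x h
    · exact (hrate_other h hh x w).le
  -- neighbours: only `x` may be lost
  have hnbr_iff : ∀ y, y ≠ x → (y ∈ nbrs cfg' w ↔ y ∈ nbrs cfg w) := by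
    intro y hy
    simp only [nbrs, Finset.mem_filter, Finset.mem_univ, true_and]
    unfold connected
    rw [hmeet y w hy (Ne.symm hxw)]
  have hn1 : (nbrs cfg w).erase x ⊆ nbrs cfg' w := by
    intro y hy
    obtain ⟨hyx, hyn⟩ := Finset.mem_erase.1 hy
    exact (hnbr_iff y hyx).2 hyn
  have hcard1 : ((nbrs cfg w).card : ℝ) ≤ (nbrs cfg' w).card + 1 := by
    have h1 : nbrs cfg w ⊆ insert x ((nbrs cfg w).erase x) := by
      intro y hy
      by_cases hyx : y = x
      · exact Finset.mem_insert.2 (Or.inl hyx)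
      · exact Finset.mem_insert.2 (Or.inr (Finset.mem_erase.2 ⟨hyx, hy⟩))
    have h2 : (nbrs cfg w).card ≤ ((nbrs cfg w).erase x).card + 1 :=
      le_trans (Finset.card_le_card h1) (Finset.card_insert_le _ _)
    have h3 : ((nbrs cfg w).erase x).card ≤ (nbrs cfg' w).card := Finset.card_le_card hn1
    push_cast
    exact_mod_cast le_trans h2 (by omega)
  -- the stability inequality
  have hstab := hst.2 w s' hvalid'
  have hutil' : utility a b c cfg' w
      = a * ((nbrs cfg' w).card : ℝ) - stratCost b c w (cfg w) + c * rateBy cfg w w x := by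
    unfold utility
    rw [hcfgw, hcost]
    ring
  have hutil : utility a b c cfg w = a * ((nbrs cfg w).card : ℝ) - stratCost b c w (cfg w) :=
    rfl
  rw [hutil', hutil] at hstab
  constructor
  · -- c * M ≤ a
    nlinarith [hcard1, rateBy_nonneg hval w w x]
  · -- if x not connected, rate is 0
    intro hnc
    have hxnot : x ∉ nbrs cfg w := by
      simp only [nbrs, Finset.mem_filter, Finset.mem_univ, true_and]
      exact hnc
    have hxnot' : x ∉ nbrs cfg' w := by
      simp only [nbrs, Finset.mem_filter, Finset.mem_univ, true_and]
      intro hcn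
      exact hnc ⟨hcn.1, le_trans hcn.2 hmeetx⟩
    have heq : nbrs cfg' w = nbrs cfg w := by
      apply Finset.ext
      intro y
      by_cases hyx : y = x
      · subst hyx
        simp [hxnot, hxnot']
      · exact hnbr_iff y hyx
    rw [heq] at hstab
    have : c * rateBy cfg w w x ≤ 0 := by linarith
    have h0 := rateBy_nonneg hval w w x
    nlinarith

end Facts

/-- In a stable tight configuration, for any edge of `G` inside the strong set `H`,
the contribution of the endpoint itself is exactly `a / c`. -/
private lemma key_rate {V : Type*} [Fintype V] [DecidableEq V]
    (a b c : ℝ) (ha : 0 < a) (hc : 0 < c)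
    {cfg : Config V} (hst : Stable a b c cfg)
    {G : SimpleGraph V} (hsupp : Supports cfg G)
    {H : Finset V} {ℓ : ℕ} (hℓ : 0 < ℓ) (hcard : H.card = ℓ)
    (hstrong : ∀ u ∈ H, ∀ v ∈ H, ∀ w : V, G.Adj u w → G.Adj v w → w ∈ H)
    (hγ : a / c ≤ 1 / (ℓ : ℝ)) :
    ∀ u ∈ H, ∀ v : V, G.Adj u v → rateBy cfg u u v = a / c := by
  intro u hu v hadj
  have hval : ConfigValid cfg := hst.1
  have hvH : v ∈ H := hstrong u hu u hu v hadj hadj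
  have hconn : connected cfg u v := (hsupp u v).1 hadj
  have hne : u ≠ v := hconn.1
  have hℓR : (0 : ℝ) < (ℓ : ℝ) := by exact_mod_cast hℓ
  -- support of the meet comes only from H
  have hmeetH : meet cfg u v = ∑ w ∈ H, rateBy cfg w u v := by
    unfold meet
    rw [← Finset.sum_subset (Finset.subset_univ H)]
    intro w _ hwH
    by_contra hne0
    have hpos : 0 < rateBy cfg w u v :=
      lt_of_le_of_ne (rateBy_nonneg hval w u v) (Ne.symm hne0)
    have hwu : u ≠ w := fun h => hwH (h ▸ hu)
    have hwv : v ≠ w := fun h => hwH (h ▸ hvH)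
    have hcu : connected cfg u w := by
      by_contra hncu
      have := (removal ha hc hst hwu).2 hncu
      have hle := rateBy_le_host hval w u v
      rw [this] at hle
      linarith
    have hcv : connected cfg v w := by
      by_contra hncv
      have := (removal ha hc hst hwv).2 hncv
      have hle := (rateBy_symm cfg w u v) ▸ rateBy_le_host hval w v u
      rw [this] at hle
      linarith
    exact hwH (hstrong u hu v hvH w ((hsupp u w).2 hcu) ((hsupp v w).2 hcv))
  -- each contribution is at most a/c
  have hbound : ∀ w ∈ H, rateBy cfg w u v ≤ a / c := by
    intro w _
    rcases eq_or_ne w u with rfl | hwu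
    · have := (removal ha hc hst hne.symm).1
      rw [le_div_iff₀ hc]
      linarith
    · have h1 := rateBy_le_host hval w u v
      have h2 := (removal ha hc hst (Ne.symm hwu)).1
      rw [le_div_iff₀ hc]
      nlinarith
  -- tightness
  have hsum : 1 ≤ ∑ w ∈ H, rateBy cfg w u v := hmeetH ▸ hconn.2
  have hrest : ∑ w ∈ H.erase u, rateBy cfg w u v ≤ ((ℓ : ℝ) - 1) * (1 / (ℓ : ℝ)) := by
    have h1 : ∀ w ∈ H.erase u, rateBy cfg w u v ≤ 1 / (ℓ : ℝ) :=
      fun w hw => le_trans (hbound w (Finset.mem_of_mem_erase hw)) hγ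
    have h2 := Finset.sum_le_card_nsmul (H.erase u) _ _ h1
    rw [Finset.card_erase_of_mem hu, hcard, nsmul_eq_mul] at h2
    have h3 : ((ℓ - 1 : ℕ) : ℝ) = (ℓ : ℝ) - 1 := by
      have : 1 ≤ ℓ := hℓ
      push_cast [Nat.cast_sub this]
      ring
    rw [h3] at h2
    exact h2
  have hsplit : rateBy cfg u u v + ∑ w ∈ H.erase u, rateBy cfg w u v
      = ∑ w ∈ H, rateBy cfg w u v := Finset.add_sum_erase H (fun w => rateBy cfg w u v) hu
  have hlow : 1 / (ℓ : ℝ) ≤ rateBy cfg u u v := by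
    have hfield : 1 - ((ℓ : ℝ) - 1) * (1 / (ℓ : ℝ)) = 1 / (ℓ : ℝ) := by
      field_simp
      ring
    nlinarith
  have hhigh := hbound u hu
  linarith [le_trans hγ hlow]

/-- If `H` is a strong subgraph on `ℓ` vertices of the network supported
by a stable configuration (all common neighbours of vertices of `H` lie in `H`) and
`γ = a/c ≤ 1/ℓ`, then `H` contains no edges; in particular `K_ℓ` can be a strong subgraph
of a supportable network only if `γ > 1/ℓ`. -/
theorem strong_subgraph_no_edges {V : Type*} [Fintype V] [DecidableEq V]
    (a b c : ℝ) (ha : 0 < a) (hb : 0 < b) (hc : 0 < c)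
    (cfg : Config V) (hst : Stable a b c cfg)
    (G : SimpleGraph V) [DecidableRel G.Adj] (hsupp : Supports cfg G)
    (H : Finset V) (ℓ : ℕ) (hℓ : 0 < ℓ) (hcard : H.card = ℓ)
    (hstrong : ∀ u ∈ H, ∀ v ∈ H, ∀ w : V, G.Adj u w → G.Adj v w → w ∈ H)
    (hγ : a / c ≤ 1 / (ℓ : ℝ)) :
    ∀ u ∈ H, ∀ v ∈ H, ¬ G.Adj u v := by
  intro u hu v hv hadj
  have hval : ConfigValid cfg := hst.1
  have hkey := key_rate a b c ha hc hst hsupp hℓ hcard hstrong hγ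
  -- the deviation: u plays the empty strategy
  have hvalid0 : ValidStrategy u ([] : List (Finset V × ℝ)) := by
    intro e he
    simp at he
  set cfg' := Function.update cfg u ([] : List (Finset V × ℝ)) with hcfg'
  have hstab := hst.2 u [] hvalid0
  have hcfgu : cfg' u = [] := Function.update_self u [] cfg
  -- new neighbours form a subset of old
  have hsub : nbrs cfg' u ⊆ nbrs cfg u := by
    intro y hy
    simp only [nbrs, Finset.mem_filter, Finset.mem_univ, true_and] at hy ⊢
    refine ⟨hy.1, le_trans hy.2 ?_⟩
    unfold meet
    apply Finset.sum_le_sum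
    intro h _
    rcases eq_or_ne h u with rfl | hh
    · have : rateBy cfg' h y h = 0 := by
        unfold rateBy
        rw [hcfgu]
        simp
      rw [this]
      exact rateBy_nonneg hval h y h
    · unfold rateBy
      rw [hcfg', Function.update_of_ne hh]
  set L := nbrs cfg u \ nbrs cfg' u with hL
  have hLcard : (L.card : ℝ) = ((nbrs cfg u).card : ℝ) - ((nbrs cfg' u).card : ℝ) := by
    rw [hL, Finset.card_sdiff_of_subset hsub]
    have := Finset.card_le_card hsub
    push_cast [Nat.cast_sub this]
    ring
  -- each lost neighbour has rate exactly a/c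
  have hLrate : ∀ x ∈ L, rateBy cfg u u x = a / c := by
    intro x hx
    have hxn : x ∈ nbrs cfg u := (Finset.mem_sdiff.1 hx).1
    simp only [nbrs, Finset.mem_filter, Finset.mem_univ, true_and] at hxn
    have hconn : connected cfg u x := connected_symm hxn
    exact hkey u hu x ((hsupp u x).2 hconn)
  have huL : u ∉ L := by
    intro hx
    have hxn : u ∈ nbrs cfg u := (Finset.mem_sdiff.1 hx).1
    simp only [nbrs, Finset.mem_filter, Finset.mem_univ, true_and] at hxn
    exact hxn.1 rfl
  -- lower bound on the cost of u's strategy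
  have hcost : c * (∑ x ∈ L, rateBy cfg u u x) + b * rateBy cfg u u u
      ≤ stratCost b c u (cfg u) := by
    unfold rateBy stratCost
    rw [aux_swap L (cfg u), ← aux_sum_map_mul (cfg u) c, ← aux_sum_map_mul (cfg u) b,
      ← aux_sum_map_add]
    apply List.sum_le_sum
    intro e he
    have hu_mem : u ∈ e.1 := (hval u e he).1
    have hr : 0 < e.2 := (hval u e he).2
    have h1 : ∑ x ∈ L, (if u ∈ e.1 ∧ x ∈ e.1 then e.2 else 0)
        = ((L ∩ e.1).card : ℝ) * e.2 := by
      have : ∀ x ∈ L, (if u ∈ e.1 ∧ x ∈ e.1 then e.2 else 0)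
          = (if x ∈ e.1 then e.2 else 0) := by
        intro x _
        by_cases hxe : x ∈ e.1 <;> simp [hxe, hu_mem]
      rw [Finset.sum_congr rfl this, ← Finset.sum_filter, Finset.filter_mem_eq_inter,
        Finset.sum_const, nsmul_eq_mul]
    rw [h1, if_pos ⟨hu_mem, hu_mem⟩]
    have hsub2 : L ∩ e.1 ⊆ e.1.erase u := by
      intro x hx
      obtain ⟨hxL, hxe⟩ := Finset.mem_inter.1 hx
      exact Finset.mem_erase.2 ⟨fun h => huL (h ▸ hxL), hxe⟩
    have hcardle : ((L ∩ e.1).card : ℝ) ≤ ((e.1.erase u).card : ℝ) := by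
      exact_mod_cast Finset.card_le_card hsub2
    nlinarith [mul_nonneg (mul_nonneg hc.le (sub_nonneg.2 hcardle)) hr.le]
  -- total rate is positive
  have hR : a / c ≤ rateBy cfg u u u := by
    have h1 := rateBy_le_host hval u u v
    have h2 : rateBy cfg u u v = a / c := hkey u hu v hadj
    linarith
  have hRpos : 0 < rateBy cfg u u u := lt_of_lt_of_le (div_pos ha hc) hR
  -- putting everything together
  have hLsum : ∑ x ∈ L, rateBy cfg u u x = (L.card : ℝ) * (a / c) := by
    rw [Finset.sum_congr rfl hLrate, Finset.sum_const, nsmul_eq_mul]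
  have hutil' : utility a b c cfg' u = a * ((nbrs cfg' u).card : ℝ) := by
    unfold utility stratCost
    rw [hcfgu]
    simp
  have hcLa : c * ((L.card : ℝ) * (a / c)) = a * (L.card : ℝ) := by
    field_simp
  have hfinal : utility a b c cfg u < utility a b c cfg' u := by
    rw [hutil']
    unfold utility
    rw [hLsum, hcLa] at hcost
    have : a * ((nbrs cfg u).card : ℝ) - stratCost b c u (cfg u)
        ≤ a * ((nbrs cfg' u).card : ℝ) - b * rateBy cfg u u u := by
      nlinarith [hLcard]
    nlinarith
  linarith
end

section
/- For γ > 1/ℓ (and b arbitrarily small), the configuration in which each of ℓ agents holds a single event inviting all other ℓ−1 agents at rate 1/ℓ is a Nash equilibrium of the social-event game restricted to these ℓ agents, and it supports the complete graph K_ℓ: every pair has meeting rate exactly 1, each agent's invitation rate 1/ℓ toward each neighbor is strictly below γ, and any unilateral rate reduction by an agent destroys all of his connections since each pairwise meeting rate is exactly at threshold. -/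
open Finset

section Aux

variable {V : Type*} [Fintype V] [DecidableEq V]

/-- Swap the sums: total erased attendance counted two ways. -/
lemma aux_sum_swap (v : V) (s : List (Finset V × ℝ)) :
    ∑ u ∈ univ.erase v, (s.map (fun e => if u ∈ e.1 then e.2 else 0)).sum
      = (s.map (fun e => e.2 * ((e.1.erase v).card : ℝ))).sum := by
  induction s with
  | nil => simp
  | cons e s ih =>
    simp only [List.map_cons, List.sum_cons, Finset.sum_add_distrib, ih]
    congr 1
    rw [Finset.sum_ite_mem]
    have h : univ.erase v ∩ e.1 = e.1.erase v := by
      ext x; simp [and_comm]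
    rw [h, Finset.sum_const, nsmul_eq_mul, mul_comm]

lemma aux_stratCost (b c : ℝ) (v : V) (s : List (Finset V × ℝ)) :
    stratCost b c v s
      = c * (s.map (fun e => e.2 * ((e.1.erase v).card : ℝ))).sum
        + b * (s.map Prod.snd).sum := by
  induction s with
  | nil => simp [stratCost]
  | cons e s ih =>
    simp only [stratCost, List.map_cons, List.sum_cons] at *
    rw [ih]; ring

end Aux

/-- For `γ = a/c > 1/ℓ` and `b` sufficiently small, the configuration in
which each of the `ℓ` agents holds a single event inviting everyone at rate `1/ℓ` is a Nash
equilibrium supporting the complete graph `K_ℓ`: every pair meets at rate exactly `1`, and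
every invitation rate `1/ℓ` is strictly below `γ`. -/
theorem clique_configuration_stable {V : Type*} [Fintype V] [DecidableEq V]
    (ℓ : ℕ) (hℓ : 2 ≤ ℓ) (hcard : Fintype.card V = ℓ)
    (a c : ℝ) (ha : 0 < a) (hc : 0 < c) (hγ : 1 / (ℓ : ℝ) < a / c) :
    ∃ b₀ > (0 : ℝ), ∀ b : ℝ, 0 < b → b < b₀ →
      Stable a b c (fun _ : V => [(Finset.univ, 1 / (ℓ : ℝ))]) ∧
      (∀ u v : V, u ≠ v → meet (fun _ : V => [(Finset.univ, 1 / (ℓ : ℝ))]) u v = 1) ∧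
      (∀ u v : V, u ≠ v → connected (fun _ : V => [(Finset.univ, 1 / (ℓ : ℝ))]) u v) ∧
      (∀ u v : V, u ≠ v →
        rateBy (fun _ : V => [(Finset.univ, 1 / (ℓ : ℝ))]) v v u = 1 / (ℓ : ℝ) ∧
        1 / (ℓ : ℝ) < a / c) := by
  have hℓ0 : (0 : ℝ) < (ℓ : ℝ) := by
    exact_mod_cast Nat.lt_of_lt_of_le Nat.zero_lt_two hℓ
  set r : ℝ := 1 / (ℓ : ℝ) with hr_def
  have hr0 : 0 < r := by positivity
  have hℓr : (ℓ : ℝ) * r = 1 := by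
    rw [hr_def]; field_simp
  have hb₀ : (0 : ℝ) < (ℓ : ℝ) * a - c := by
    rw [div_lt_div_iff₀ hℓ0 hc] at hγ
    nlinarith
  set cfg : Config V := (fun _ : V => [(Finset.univ, r)]) with hcfg
  -- meeting rate is 1 for all pairs
  have hmeet : ∀ u v : V, meet cfg u v = 1 := by
    intro u v
    have hrb : ∀ w : V, rateBy cfg w u v = r := by
      intro w; simp [rateBy, hcfg]
    simp only [meet, hrb, Finset.sum_const, Finset.card_univ, hcard, nsmul_eq_mul]
    exact hℓr
  have hconn : ∀ u v : V, u ≠ v → connected cfg u v := fun u v huv => ⟨huv, le_of_eq (hmeet u v).symm⟩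
  have hnbrs : ∀ v : V, nbrs cfg v = univ.erase v := by
    intro v
    ext u
    simp only [nbrs, Finset.mem_filter, Finset.mem_univ, true_and, Finset.mem_erase, and_true]
    constructor
    · exact fun h => h.1
    · exact fun h => hconn u v h
  have hcarderase : ∀ v : V, ((univ.erase v).card : ℝ) = (ℓ : ℝ) - 1 := by
    intro v
    rw [Finset.card_erase_of_mem (Finset.mem_univ v), Finset.card_univ, hcard]
    have : 1 ≤ ℓ := le_trans one_le_two hℓ
    push_cast [Nat.cast_sub this]
    ring
  refine ⟨(ℓ : ℝ) * a - c, hb₀, fun b hb hbb => ?_⟩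
  refine ⟨⟨?_, ?_⟩, fun u v _ => hmeet u v, fun u v huv => hconn u v huv, fun u v huv => ⟨by simp [rateBy, hcfg], hγ⟩⟩
  · -- validity
    intro v e he
    simp only [hcfg, List.mem_singleton] at he
    subst he
    exact ⟨Finset.mem_univ v, hr0⟩
  · -- Nash equilibrium
    intro v s hs
    set cfg' := Function.update cfg v s with hcfg'
    set R : V → ℝ := fun u => (s.map (fun e => if u ∈ e.1 then e.2 else 0)).sum with hR
    have hR0 : ∀ u, 0 ≤ R u := by
      intro u
      apply List.sum_nonneg
      intro x hx
      obtain ⟨e, he, rfl⟩ := List.mem_map.mp hx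
      split
      · exact (hs e he).2.le
      · exact le_refl 0
    set T : ℝ := (s.map Prod.snd).sum with hT
    have hRT : ∀ u, R u ≤ T := by
      intro u
      apply List.sum_le_sum
      intro e he
      split
      · exact le_refl _
      · exact (hs e he).2.le
    have hT0 : 0 ≤ T := le_trans (hR0 v) (hRT v)
    -- meeting rate in the deviated configuration
    have hmeet' : ∀ u : V, meet cfg' u v = ((ℓ : ℝ) - 1) * r + R u := by
      intro u
      rw [meet, ← Finset.sum_erase_add _ _ (Finset.mem_univ v)]
      congr 1
      · have : ∀ w ∈ univ.erase v, rateBy cfg' w u v = r := by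
          intro w hw
          rw [hcfg', rateBy, Function.update_of_ne (Finset.mem_erase.mp hw).1]
          simp [hcfg]
        rw [Finset.sum_congr rfl this, Finset.sum_const, nsmul_eq_mul, hcarderase v]
      · rw [rateBy, hcfg', Function.update_self, hR]
        congr 1
        apply List.map_congr_left
        intro e he
        simp [(hs e he).1]
    set N : Finset V := nbrs cfg' v with hN
    have hNmem : ∀ u, u ∈ N ↔ (u ≠ v ∧ r ≤ R u) := by
      intro u
      classical
      rw [hN, nbrs, Finset.mem_filter]
      simp only [Finset.mem_univ, true_and, connected, hmeet' u]
      constructor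
      · rintro ⟨h1, h2⟩; exact ⟨h1, by nlinarith⟩
      · rintro ⟨h1, h2⟩; exact ⟨h1, by nlinarith⟩
    have hNsub : N ⊆ univ.erase v := by
      intro u hu
      exact Finset.mem_erase.mpr ⟨((hNmem u).mp hu).1, Finset.mem_univ u⟩
    have hNcard : N.card ≤ ℓ - 1 := by
      calc N.card ≤ (univ.erase v).card := Finset.card_le_card hNsub
        _ = ℓ - 1 := by rw [Finset.card_erase_of_mem (Finset.mem_univ v), Finset.card_univ, hcard]
    -- the sum of rates toward others
    have hSsum : (N.card : ℝ) * r ≤ ∑ u ∈ univ.erase v, R u := by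
      calc (N.card : ℝ) * r = ∑ _u ∈ N, r := by rw [Finset.sum_const, nsmul_eq_mul]
        _ ≤ ∑ u ∈ N, R u := Finset.sum_le_sum (fun u hu => ((hNmem u).mp hu).2)
        _ ≤ ∑ u ∈ univ.erase v, R u := Finset.sum_le_sum_of_subset_of_nonneg hNsub
            (fun u _ _ => hR0 u)
    -- utilities
    have hu' : utility a b c cfg' v
        = a * (N.card : ℝ) - (c * (∑ u ∈ univ.erase v, R u) + b * T) := by
      rw [utility, hcfg', Function.update_self, ← hcfg', ← hN, aux_stratCost, hR,
        aux_sum_swap, hT]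
    have hu : utility a b c cfg v = a * ((ℓ : ℝ) - 1) - r * (c * ((ℓ : ℝ) - 1) + b) := by
      rw [utility, hnbrs v, hcarderase v]
      have hsc : stratCost b c v (cfg v) = r * (c * ((univ.erase v).card : ℝ) + b) := by
        simp [stratCost, hcfg]
      rw [hsc, hcarderase v]
    rw [hu', hu]
    set S : ℝ := ∑ u ∈ univ.erase v, R u with hS
    have hbr : b * r < a - c * r := by
      have := mul_lt_mul_of_pos_right hbb hr0
      nlinarith
    rcases eq_or_lt_of_le hNcard with heq | hlt
    · -- all ℓ - 1 possible connections kept: need T ≥ r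
      have hNne : N.Nonempty := by
        rw [← Finset.card_pos]
        omega
      obtain ⟨u₀, hu₀⟩ := hNne
      have hrT : r ≤ T := le_trans ((hNmem u₀).mp hu₀).2 (hRT u₀)
      have hkcast : (N.card : ℝ) = (ℓ : ℝ) - 1 := by
        rw [heq]
        have h1 : 1 ≤ ℓ := le_trans one_le_two hℓ
        push_cast [Nat.cast_sub h1]; ring
      rw [hkcast] at hSsum ⊢
      nlinarith [mul_le_mul_of_nonneg_left hrT hb.le]
    · -- at most ℓ - 2 connections
      have hk2 : (N.card : ℝ) ≤ (ℓ : ℝ) - 2 := by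
        have : N.card + 2 ≤ ℓ := by omega
        have := (Nat.cast_le (α := ℝ)).mpr this
        push_cast at this
        linarith
      have hacr : 0 < a - c * r := lt_trans (mul_pos hb hr0) hbr
      nlinarith [mul_nonneg (sub_nonneg.mpr hk2) hacr.le, mul_le_mul_of_nonneg_left hSsum hc.le,
        mul_nonneg hb.le hT0, mul_pos hb hr0]
end

section
/- Let H_{k,1} (k > 2) be the graph consisting of two k-cliques sharing exactly one vertex v. If 1/k < γ < 1 − 1/k, then the configuration in which every vertex holds a single event inviting all of its neighbors at rate 1/k is stable and supports H_{k,1}: within each clique every pair meets at rate exactly 1; the only pairs of non-adjacent vertices lie in different cliques and have meeting rate at most 1/k (supported only by v), so creating a new connection would require additional invitation rate at least 1 − 1/k > γ, which is unprofitable. -/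
open Finset

/-- The configuration supporting `H_{k,1}`: the shared vertex `v` holds a single event for
`A ∪ B` at rate `1/k`; every other member of `A` (resp. `B`) holds a single event for `A`
(resp. `B`) at rate `1/k`. -/
noncomputable def bowtieCfg {V : Type*} [DecidableEq V] (A B : Finset V) (v : V) (k : ℕ) : Config V :=
  fun u => if u = v then [(A ∪ B, 1 / (k : ℝ))]
    else if u ∈ A then [(A, 1 / (k : ℝ))] else [(B, 1 / (k : ℝ))]

section BowtieAux
set_option linter.unusedSectionVars false
variable {V : Type*} [Fintype V] [DecidableEq V]

def bEvent (A B : Finset V) (v : V) (w : V) : Finset V :=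
  if w = v then A ∪ B else if w ∈ A then A else B

lemma bowtieCfg_apply (A B : Finset V) (v : V) (k : ℕ) (w : V) :
    bowtieCfg A B v k w = [(bEvent A B v w, 1 / (k : ℝ))] := by
  unfold bowtieCfg bEvent; split_ifs <;> rfl

lemma rateBy_bowtie (A B : Finset V) (v : V) (k : ℕ) (w x y : V) :
    rateBy (bowtieCfg A B v k) w x y =
      if x ∈ bEvent A B v w ∧ y ∈ bEvent A B v w then 1 / (k : ℝ) else 0 := by
  simp [rateBy, bowtieCfg_apply]

lemma meet_comm (cfg : Config V) (x y : V) : meet cfg x y = meet cfg y x := by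
  unfold meet rateBy
  simp only [and_comm]

lemma bowtieCfg_comm (A B : Finset V) (v : V) (k : ℕ)
    (hAB : A ∩ B = {v}) (hUnion : A ∪ B = Finset.univ) :
    bowtieCfg A B v k = bowtieCfg B A v k := by
  funext w
  unfold bowtieCfg
  by_cases hw : w = v
  · simp [hw, Finset.union_comm]
  · simp only [if_neg hw]
    by_cases hwA : w ∈ A
    · have hwB : w ∉ B := fun hB => hw (by
        have : w ∈ A ∩ B := Finset.mem_inter.mpr ⟨hwA, hB⟩
        simpa [hAB] using this)
      simp [hwA, hwB]
    · have hwB : w ∈ B := by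
        have : w ∈ A ∪ B := hUnion ▸ Finset.mem_univ w
        rcases Finset.mem_union.mp this with h | h
        · exact absurd h hwA
        · exact h
      simp [hwA, hwB]

lemma sum_split {A B : Finset V} (hUnion : A ∪ B = Finset.univ) (f : V → ℝ) :
    ∑ w, f w = ∑ w ∈ A, f w + ∑ w ∈ B \ A, f w := by
  rw [show (Finset.univ : Finset V) = A ∪ (B \ A) by
    rw [Finset.union_sdiff_self_eq_union, hUnion]]
  exact Finset.sum_union Finset.disjoint_sdiff

lemma mem_v {A B : Finset V} {v : V} (hAB : A ∩ B = {v}) : v ∈ A ∧ v ∈ B := by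
  have : v ∈ A ∩ B := by rw [hAB]; exact Finset.mem_singleton_self v
  exact Finset.mem_inter.mp this

lemma meet_bowtie_AA {A B : Finset V} {v : V} {k : ℕ}
    (hAB : A ∩ B = {v}) (hA : A.card = k) (hk : (k : ℝ) ≠ 0)
    {x y : V} (hx : x ∈ A) (hy : y ∈ A) (hxy : x ≠ y) (hUnion : A ∪ B = Finset.univ) :
    meet (bowtieCfg A B v k) x y = 1 := by
  have hvA := (mem_v hAB).1
  unfold meet
  rw [sum_split hUnion]
  have step : ∀ w ∈ A, rateBy (bowtieCfg A B v k) w x y = 1 / (k : ℝ) := by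
    intro w hw
    have hmem : x ∈ bEvent A B v w ∧ y ∈ bEvent A B v w := by
      unfold bEvent
      by_cases hwv : w = v
      · simp only [if_pos hwv]
        exact ⟨Finset.mem_union_left _ hx, Finset.mem_union_left _ hy⟩
      · simp only [if_neg hwv, if_pos hw]
        exact ⟨hx, hy⟩
    rw [rateBy_bowtie, if_pos hmem]
  have h1 : ∑ w ∈ A, rateBy (bowtieCfg A B v k) w x y = (k : ℝ) * (1 / (k : ℝ)) := by
    rw [Finset.sum_congr rfl step, Finset.sum_const, nsmul_eq_mul, hA]
  have h2 : ∑ w ∈ B \ A, rateBy (bowtieCfg A B v k) w x y = 0 := by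
    refine Finset.sum_eq_zero fun w hw => ?_
    obtain ⟨hwB, hwA⟩ := Finset.mem_sdiff.mp hw
    have hwv : w ≠ v := fun h => hwA (h ▸ hvA)
    rw [rateBy_bowtie, if_neg]
    unfold bEvent
    simp only [if_neg hwv, if_neg hwA]
    rintro ⟨hxB, hyB⟩
    have hx' : x ∈ ({v} : Finset V) := hAB ▸ Finset.mem_inter.mpr ⟨hx, hxB⟩
    have hy' : y ∈ ({v} : Finset V) := hAB ▸ Finset.mem_inter.mpr ⟨hy, hyB⟩
    exact hxy ((Finset.mem_singleton.mp hx').trans (Finset.mem_singleton.mp hy').symm)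
  rw [h1, h2, add_zero]
  field_simp

lemma meet_bowtie_cross {A B : Finset V} {v : V} {k : ℕ}
    (hAB : A ∩ B = {v}) (hUnion : A ∪ B = Finset.univ)
    {x y : V} (hx : x ∈ A) (hxB : x ∉ B) (hy : y ∈ B) (hyA : y ∉ A) :
    meet (bowtieCfg A B v k) x y = 1 / (k : ℝ) := by
  have hvA := (mem_v hAB).1
  unfold meet
  rw [sum_split hUnion]
  have h1 : ∑ w ∈ A, rateBy (bowtieCfg A B v k) w x y = 1 / (k : ℝ) := by
    rw [Finset.sum_eq_single v]
    · have hmem : x ∈ bEvent A B v v ∧ y ∈ bEvent A B v v := by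
        unfold bEvent
        simp only [if_pos rfl]
        exact ⟨Finset.mem_union_left _ hx, Finset.mem_union_right _ hy⟩
      rw [rateBy_bowtie, if_pos hmem]
    · intro w hw hwv
      rw [rateBy_bowtie, if_neg]
      unfold bEvent
      simp only [if_neg hwv, if_pos hw]
      rintro ⟨-, hyA'⟩; exact hyA hyA'
    · intro h; exact absurd hvA h
  have h2 : ∑ w ∈ B \ A, rateBy (bowtieCfg A B v k) w x y = 0 := by
    refine Finset.sum_eq_zero fun w hw => ?_
    obtain ⟨hwB, hwA⟩ := Finset.mem_sdiff.mp hw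
    have hwv : w ≠ v := fun h => hwA (h ▸ hvA)
    rw [rateBy_bowtie, if_neg]
    unfold bEvent
    simp only [if_neg hwv, if_neg hwA]
    rintro ⟨hxB', -⟩; exact hxB hxB'
  rw [h1, h2, add_zero]
end BowtieAux

lemma connected_bowtie_iff {V : Type*} [Fintype V] [DecidableEq V]
    {A B : Finset V} {v : V} {k : ℕ} (hk : 2 < k)
    (hAB : A ∩ B = {v}) (hA : A.card = k) (hB : B.card = k) (hUnion : A ∪ B = Finset.univ)
    {x y : V} (hxy : x ≠ y) :
    connected (bowtieCfg A B v k) x y ↔ ((x ∈ A ∧ y ∈ A) ∨ (x ∈ B ∧ y ∈ B)) := by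
  have hk2 : (2 : ℝ) < (k : ℝ) := by exact_mod_cast hk
  have hk0 : (k : ℝ) ≠ 0 := by linarith
  have hlt : 1 / (k : ℝ) < 1 := by
    rw [div_lt_one (by linarith)]; linarith
  have hBA : B ∩ A = {v} := by rw [Finset.inter_comm]; exact hAB
  have hUBA : B ∪ A = Finset.univ := by rw [Finset.union_comm]; exact hUnion
  constructor
  · rintro ⟨-, h1⟩
    by_contra hno
    push_neg at hno
    have hxAB : x ∈ A ∪ B := hUnion ▸ Finset.mem_univ x
    have hyAB : y ∈ A ∪ B := hUnion ▸ Finset.mem_univ y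
    by_cases hxA : x ∈ A
    · have hyA : y ∉ A := hno.1 hxA
      have hyB : y ∈ B := (Finset.mem_union.mp hyAB).resolve_left hyA
      have hxB : x ∉ B := fun h => hno.2 h hyB
      rw [meet_bowtie_cross hAB hUnion hxA hxB hyB hyA] at h1
      linarith
    · have hxB : x ∈ B := (Finset.mem_union.mp hxAB).resolve_left hxA
      have hyB : y ∉ B := hno.2 hxB
      have hyA : y ∈ A := (Finset.mem_union.mp hyAB).resolve_right hyB
      rw [meet_comm, meet_bowtie_cross hAB hUnion hyA hyB hxB hxA] at h1
      linarith
  · intro h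
    refine ⟨hxy, ?_⟩
    rcases h with ⟨hx, hy⟩ | ⟨hx, hy⟩
    · rw [meet_bowtie_AA hAB hA hk0 hx hy hxy hUnion]
    · rw [bowtieCfg_comm A B v k hAB hUnion,
        meet_bowtie_AA hBA hB hk0 hx hy hxy hUBA]

section Nbrs
variable {V : Type*} [Fintype V] [DecidableEq V]
set_option linter.unusedSectionVars false

lemma not_mem_other {A B : Finset V} {v : V} (hAB : A ∩ B = {v})
    {u : V} (hu : u ∈ A) (huv : u ≠ v) : u ∉ B := fun hB => huv (by
  have : u ∈ A ∩ B := Finset.mem_inter.mpr ⟨hu, hB⟩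
  simpa [hAB] using this)

lemma nbrs_bowtie_ne {A B : Finset V} {v : V} {k : ℕ} (hk : 2 < k)
    (hAB : A ∩ B = {v}) (hA : A.card = k) (hB : B.card = k) (hUnion : A ∪ B = Finset.univ)
    {u : V} (hu : u ∈ A) (huv : u ≠ v) :
    nbrs (bowtieCfg A B v k) u = A.erase u := by
  have huB : u ∉ B := not_mem_other hAB hu huv
  ext w
  simp only [nbrs, Finset.mem_filter, Finset.mem_univ, true_and, Finset.mem_erase]
  constructor
  · intro hc
    have hwu : w ≠ u := hc.1
    rcases (connected_bowtie_iff hk hAB hA hB hUnion hwu).mp hc with ⟨h1, -⟩ | ⟨-, h2⟩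
    · exact ⟨hwu, h1⟩
    · exact absurd h2 huB
  · rintro ⟨hwu, hwA⟩
    exact (connected_bowtie_iff hk hAB hA hB hUnion hwu).mpr (Or.inl ⟨hwA, hu⟩)

lemma nbrs_bowtie_v {A B : Finset V} {v : V} {k : ℕ} (hk : 2 < k)
    (hAB : A ∩ B = {v}) (hA : A.card = k) (hB : B.card = k) (hUnion : A ∪ B = Finset.univ) :
    nbrs (bowtieCfg A B v k) v = Finset.univ.erase v := by
  have hv := mem_v hAB
  ext w
  simp only [nbrs, Finset.mem_filter, Finset.mem_univ, true_and, Finset.mem_erase, and_true]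
  constructor
  · exact fun hc => hc.1
  · intro hwv
    refine (connected_bowtie_iff hk hAB hA hB hUnion hwv).mpr ?_
    have : w ∈ A ∪ B := hUnion ▸ Finset.mem_univ w
    rcases Finset.mem_union.mp this with h | h
    · exact Or.inl ⟨h, hv.1⟩
    · exact Or.inr ⟨h, hv.2⟩

lemma univ_card_bowtie {A B : Finset V} {v : V} {k : ℕ}
    (hAB : A ∩ B = {v}) (hA : A.card = k) (hB : B.card = k) (hUnion : A ∪ B = Finset.univ) :
    Fintype.card V + 1 = 2 * k := by
  have h := Finset.card_union_add_card_inter A B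
  rw [hUnion, hAB, hA, hB, Finset.card_singleton, Finset.card_univ] at h
  omega

lemma stratCost_bowtie {A B : Finset V} {v : V} {k : ℕ} (b c : ℝ) (u : V) :
    stratCost b c u (bowtieCfg A B v k u) =
      1 / (k : ℝ) * (c * (((bEvent A B v u).erase u).card : ℝ) + b) := by
  simp [stratCost, bowtieCfg_apply]

lemma utility_bowtie_ne {A B : Finset V} {v : V} {k : ℕ} (hk : 2 < k)
    (hAB : A ∩ B = {v}) (hA : A.card = k) (hB : B.card = k) (hUnion : A ∪ B = Finset.univ)
    {u : V} (hu : u ∈ A) (huv : u ≠ v) (a b c : ℝ) :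
    utility a b c (bowtieCfg A B v k) u =
      a * ((k : ℝ) - 1) - 1 / (k : ℝ) * (c * ((k : ℝ) - 1) + b) := by
  have hcard : (A.erase u).card = k - 1 := by rw [Finset.card_erase_of_mem hu, hA]
  have hcast : ((k - 1 : ℕ) : ℝ) = (k : ℝ) - 1 := by
    have : 1 ≤ k := by omega
    push_cast [this]; ring
  have hE : bEvent A B v u = A := by
    unfold bEvent; rw [if_neg huv, if_pos hu]
  rw [utility, nbrs_bowtie_ne hk hAB hA hB hUnion hu huv, stratCost_bowtie, hE, hcard, hcast]

lemma utility_bowtie_v {A B : Finset V} {v : V} {k : ℕ} (hk : 2 < k)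
    (hAB : A ∩ B = {v}) (hA : A.card = k) (hB : B.card = k) (hUnion : A ∪ B = Finset.univ)
    (a b c : ℝ) :
    utility a b c (bowtieCfg A B v k) v =
      a * (2 * (k : ℝ) - 2) - 1 / (k : ℝ) * (c * (2 * (k : ℝ) - 2) + b) := by
  have huniv := univ_card_bowtie hAB hA hB hUnion
  have hcard : (Finset.univ.erase v).card = 2 * k - 2 := by
    rw [Finset.card_erase_of_mem (Finset.mem_univ v), Finset.card_univ]; omega
  have hcard2 : ((A ∪ B).erase v).card = 2 * k - 2 := by
    rw [hUnion]; exact hcard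
  have hcast : ((2 * k - 2 : ℕ) : ℝ) = 2 * (k : ℝ) - 2 := by
    have : 2 ≤ 2 * k := by omega
    push_cast [this]; ring
  have hE : bEvent A B v v = A ∪ B := by unfold bEvent; rw [if_pos rfl]
  rw [utility, nbrs_bowtie_v hk hAB hA hB hUnion, stratCost_bowtie, hE, hcard, hcard2, hcast]

end Nbrs

section Stab
variable {V : Type*} [Fintype V] [DecidableEq V]
set_option linter.unusedSectionVars false

def ownRate (s : List (Finset V × ℝ)) (w : V) : ℝ :=
  (s.map (fun e => if w ∈ e.1 then e.2 else 0)).sum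

def totRate {V : Type*} (s : List (Finset V × ℝ)) : ℝ := (s.map Prod.snd).sum

lemma totRate_nonneg {s : List (Finset V × ℝ)} (hs : ∀ e ∈ s, 0 < e.2) :
    0 ≤ totRate s := by
  induction s with
  | nil => simp [totRate]
  | cons e t ih =>
    have h1 := hs e (List.mem_cons_self)
    have h2 := ih (fun e' he' => hs e' (List.mem_cons_of_mem _ he'))
    simp only [totRate, List.map_cons, List.sum_cons] at *
    linarith

lemma ownRate_le_tot {s : List (Finset V × ℝ)} (hs : ∀ e ∈ s, 0 < e.2) (w : V) :
    ownRate s w ≤ totRate s := by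
  induction s with
  | nil => simp [ownRate, totRate]
  | cons e t ih =>
    have h1 := hs e (List.mem_cons_self)
    have h2 := ih (fun e' he' => hs e' (List.mem_cons_of_mem _ he'))
    simp only [ownRate, totRate, List.map_cons, List.sum_cons] at *
    split_ifs <;> linarith

lemma cost_ge (b c : ℝ) (hb : 0 ≤ b) (hc : 0 ≤ c) (u : V) (N : Finset V) (huN : u ∉ N) :
    ∀ (s : List (Finset V × ℝ)), (∀ e ∈ s, u ∈ e.1 ∧ 0 < e.2) →
    c * ∑ w ∈ N, ownRate s w + b * totRate s ≤ stratCost b c u s := by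
  intro s
  induction s with
  | nil => simp [ownRate, totRate, stratCost]
  | cons e t ih =>
    intro hs
    have h1 := hs e (List.mem_cons_self)
    have h2 := ih (fun e' he' => hs e' (List.mem_cons_of_mem _ he'))
    simp only [ownRate, totRate, stratCost, List.map_cons, List.sum_cons] at *
    have hsum : ∑ w ∈ N, ((if w ∈ e.1 then e.2 else 0) +
        (t.map (fun e' => if w ∈ e'.1 then e'.2 else 0)).sum)
        = ∑ w ∈ N, (if w ∈ e.1 then e.2 else 0)
          + ∑ w ∈ N, (t.map (fun e' => if w ∈ e'.1 then e'.2 else 0)).sum :=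
      Finset.sum_add_distrib
    rw [hsum]
    have hcard : ∑ w ∈ N, (if w ∈ e.1 then e.2 else 0)
        = ((N.filter (· ∈ e.1)).card : ℝ) * e.2 := by
      rw [← Finset.sum_filter, Finset.sum_const, nsmul_eq_mul]
    have hsub : N.filter (· ∈ e.1) ⊆ e.1.erase u := by
      intro w hw
      obtain ⟨hwN, hwe⟩ := Finset.mem_filter.mp hw
      exact Finset.mem_erase.mpr ⟨fun h => huN (h ▸ hwN), hwe⟩
    have hle : ((N.filter (· ∈ e.1)).card : ℝ) ≤ ((e.1.erase u).card : ℝ) := by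
      exact_mod_cast Finset.card_le_card hsub
    have key : c * (((N.filter (· ∈ e.1)).card : ℝ) * e.2) + b * e.2
        ≤ e.2 * (c * ((e.1.erase u).card : ℝ) + b) := by
      have := mul_le_mul_of_nonneg_right (mul_le_mul_of_nonneg_left hle hc) h1.2.le
      nlinarith [h1.2.le]
    rw [hcard]
    linarith

lemma meet_update_s14 (cfg : Config V) (u : V) (s : List (Finset V × ℝ))
    (hs : ValidStrategy u s) (w : V) :
    meet (Function.update cfg u s) u w =
      ownRate s w + ∑ w' ∈ Finset.univ.erase u, rateBy cfg w' u w := by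
  unfold meet
  rw [← Finset.add_sum_erase _ _ (Finset.mem_univ u)]
  congr 1
  · unfold rateBy ownRate
    rw [Function.update_self]
    congr 1
    refine List.map_congr_left fun e he => ?_
    simp [(hs e he).1]
  · refine Finset.sum_congr rfl fun w' hw' => ?_
    unfold rateBy
    rw [Function.update_of_ne (Finset.mem_erase.mp hw').1]

lemma stable_core (cfg : Config V) (u : V) (s : List (Finset V × ℝ)) (hs : ValidStrategy u s)
    (P : Finset V) (huP : u ∉ P) (k : ℕ) (hk : 2 < k)
    (hFP : ∀ w ∈ P, ∑ w' ∈ Finset.univ.erase u, rateBy cfg w' u w = 1 - 1 / (k : ℝ))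
    (hFnP : ∀ w, w ≠ u → w ∉ P →
      ∑ w' ∈ Finset.univ.erase u, rateBy cfg w' u w ≤ 1 / (k : ℝ))
    (a b c : ℝ) (hb : 0 < b) (hc : 0 < c)
    (hq : 0 < a - c / (k : ℝ))
    (hneg : a - c * (1 - 1 / (k : ℝ)) ≤ 0)
    (hbase : utility a b c cfg u = (P.card : ℝ) * (a - c / (k : ℝ)) - b / (k : ℝ))
    (hb0 : b ≤ (P.card : ℝ) * ((k : ℝ) * a - c)) :
    utility a b c (Function.update cfg u s) u ≤ utility a b c cfg u := by
  have hk2 : (2 : ℝ) < (k : ℝ) := by exact_mod_cast hk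
  have hkpos : (0 : ℝ) < (k : ℝ) := by linarith
  set F : V → ℝ := fun w => ∑ w' ∈ Finset.univ.erase u, rateBy cfg w' u w with hF
  set N := nbrs (Function.update cfg u s) u with hN
  have hspos : ∀ e ∈ s, 0 < e.2 := fun e he => (hs e he).2
  have huN : u ∉ N := by
    simp only [hN, nbrs, Finset.mem_filter, Finset.mem_univ, true_and]
    rintro ⟨h, -⟩; exact h rfl
  have hmem : ∀ w ∈ N, w ≠ u ∧ 1 ≤ ownRate s w + F w := by
    intro w hw
    rw [hN] at hw
    unfold nbrs at hw
    classical
    obtain ⟨-, hwu, hmeet⟩ := Finset.mem_filter.mp hw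
    rw [meet_comm, meet_update_s14 cfg u s hs w] at hmeet
    exact ⟨hwu, hmeet⟩
  have hFle : ∀ w, w ≠ u → F w ≤ 1 - 1 / (k : ℝ) := by
    intro w hwu
    by_cases hwP : w ∈ P
    · exact (hFP w hwP).le
    · have := hFnP w hwu hwP
      have h2k : 1 / (k : ℝ) ≤ 1 - 1 / (k : ℝ) := by
        rw [div_le_iff₀ hkpos, sub_mul, one_mul, div_mul_cancel₀ _ (ne_of_gt hkpos)]
        linarith
      linarith
  have hutil' : utility a b c (Function.update cfg u s) u
      = a * (N.card : ℝ) - stratCost b c u s := by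
    rw [utility, Function.update_self]
  have hcost := cost_ge b c hb.le hc.le u N huN s hs
  have h1 : a * (N.card : ℝ) - c * ∑ w ∈ N, ownRate s w
      ≤ ∑ w ∈ N, (a - c * (1 - F w)) := by
    have e1 : ∑ w ∈ N, (a - c * (1 - F w))
        = a * (N.card : ℝ) - c * ∑ w ∈ N, (1 - F w) := by
      rw [Finset.sum_sub_distrib, ← Finset.mul_sum, Finset.sum_const, nsmul_eq_mul,
        mul_comm (N.card : ℝ) a]
    have e2 : ∑ w ∈ N, (1 - F w) ≤ ∑ w ∈ N, ownRate s w := by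
      refine Finset.sum_le_sum fun w hw => ?_
      have := (hmem w hw).2; linarith
    have e3 := mul_le_mul_of_nonneg_left e2 hc.le
    linarith
  have h2 : ∑ w ∈ N, (a - c * (1 - F w)) ≤ (P.card : ℝ) * (a - c / (k : ℝ)) := by
    rw [← Finset.sum_filter_add_sum_filter_not N (· ∈ P)]
    have hA : ∑ w ∈ N.filter (· ∈ P), (a - c * (1 - F w))
        ≤ (P.card : ℝ) * (a - c / (k : ℝ)) := by
      have e1 : ∀ w ∈ N.filter (· ∈ P), (a - c * (1 - F w)) = a - c / (k : ℝ) := by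
        intro w hw
        rw [show F w = 1 - 1 / (k : ℝ) from hFP w (Finset.mem_filter.mp hw).2]
        rw [div_eq_mul_one_div c (k : ℝ)]; ring
      rw [Finset.sum_congr rfl e1, Finset.sum_const, nsmul_eq_mul]
      refine mul_le_mul_of_nonneg_right ?_ hq.le
      exact_mod_cast Finset.card_le_card (fun w hw => (Finset.mem_filter.mp hw).2)
    have hB : ∑ w ∈ N.filter (fun w => ¬ w ∈ P), (a - c * (1 - F w)) ≤ 0 := by
      refine Finset.sum_nonpos fun w hw => ?_
      obtain ⟨hwN, hwP⟩ := Finset.mem_filter.mp hw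
      have hwu := (hmem w hwN).1
      have := hFnP w hwu hwP
      nlinarith
    linarith
  by_cases hNe : N = ∅
  · have htot := totRate_nonneg hspos
    have hC := hcost
    rw [hNe] at hC
    simp only [Finset.sum_empty, mul_zero, zero_add] at hC
    have hub : utility a b c (Function.update cfg u s) u ≤ 0 := by
      rw [hutil', hNe]
      simp only [Finset.card_empty, Nat.cast_zero, mul_zero, zero_sub]
      nlinarith
    rw [hbase]
    have hkid : (k : ℝ) * (a - c / (k : ℝ)) = (k : ℝ) * a - c := by
      field_simp
    have : b / (k : ℝ) ≤ (P.card : ℝ) * (a - c / (k : ℝ)) := by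
      rw [div_le_iff₀ hkpos]
      calc b ≤ (P.card : ℝ) * ((k : ℝ) * a - c) := hb0
        _ = (P.card : ℝ) * (a - c / (k : ℝ)) * (k : ℝ) := by rw [← hkid]; ring
    linarith
  · obtain ⟨w₀, hw₀⟩ := Finset.nonempty_iff_ne_empty.mpr hNe
    obtain ⟨hw₀u, hw₀m⟩ := hmem w₀ hw₀
    have htot : 1 / (k : ℝ) ≤ totRate s := by
      have h1' := hFle w₀ hw₀u
      have h2' := ownRate_le_tot hspos w₀
      linarith
    have hbtot : b / (k : ℝ) ≤ b * totRate s := by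
      rw [div_eq_mul_one_div]
      exact mul_le_mul_of_nonneg_left htot hb.le
    rw [hutil', hbase]
    linarith
end Stab

section BowtieStab
variable {V : Type*} [Fintype V] [DecidableEq V]
set_option linter.unusedSectionVars false

lemma fixed_eq (cfg : Config V) (u w : V) :
    ∑ w' ∈ Finset.univ.erase u, rateBy cfg w' u w = meet cfg u w - rateBy cfg u u w := by
  unfold meet
  rw [← Finset.add_sum_erase _ _ (Finset.mem_univ u)]
  ring

lemma bowtie_stable_at {A B : Finset V} {v : V} {k : ℕ} (hk : 2 < k)
    (hAB : A ∩ B = {v}) (hA : A.card = k) (hB : B.card = k) (hUnion : A ∪ B = Finset.univ)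
    (a b c : ℝ) (hc : 0 < c) (hb : 0 < b)
    (hγ1 : 1 / (k : ℝ) < a / c) (hγ2 : a / c < 1 - 1 / (k : ℝ))
    (hb0 : b ≤ ((k : ℝ) - 1) * ((k : ℝ) * a - c))
    {u : V} (hu : u ∈ A) (s : List (Finset V × ℝ)) (hs : ValidStrategy u s) :
    utility a b c (Function.update (bowtieCfg A B v k) u s) u
      ≤ utility a b c (bowtieCfg A B v k) u := by
  have hk2 : (2 : ℝ) < (k : ℝ) := by exact_mod_cast hk
  have hkpos : (0 : ℝ) < (k : ℝ) := by linarith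
  have hk0 : (k : ℝ) ≠ 0 := ne_of_gt hkpos
  have hv := mem_v hAB
  have hBA : B ∩ A = {v} := by rw [Finset.inter_comm]; exact hAB
  have hUBA : B ∪ A = Finset.univ := by rw [Finset.union_comm]; exact hUnion
  have hca : c < (k : ℝ) * a := by
    have h := (div_lt_div_iff₀ hkpos hc).mp hγ1
    linarith
  have hq : 0 < a - c / (k : ℝ) := by
    rw [sub_pos, div_lt_iff₀ hkpos]; linarith
  have hneg : a - c * (1 - 1 / (k : ℝ)) ≤ 0 := by
    have h := (div_lt_iff₀ hc).mp hγ2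
    have e : c * (1 - 1 / (k : ℝ)) = (1 - 1 / (k : ℝ)) * c := mul_comm _ _
    linarith
  have hkm1 : (1 : ℝ) ≤ (k : ℝ) - 1 := by linarith
  rcases eq_or_ne u v with rfl | huv
  · -- the shared vertex
    have hcard : ((Finset.univ.erase u).card : ℝ) = 2 * (k : ℝ) - 2 := by
      have h := univ_card_bowtie hAB hA hB hUnion
      rw [Finset.card_erase_of_mem (Finset.mem_univ u), Finset.card_univ]
      have h2 : Fintype.card V - 1 = 2 * k - 2 := by omega
      rw [h2, Nat.cast_sub (by omega : 2 ≤ 2 * k)]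
      push_cast; ring
    refine stable_core _ u s hs (Finset.univ.erase u)
      (fun h => (Finset.mem_erase.mp h).1 rfl) k hk ?_ ?_ a b c hb hc hq hneg ?_ ?_
    · intro w hw
      have hwv : w ≠ u := (Finset.mem_erase.mp hw).1
      rw [fixed_eq]
      have hm : meet (bowtieCfg A B u k) u w = 1 := by
        by_cases hwA : w ∈ A
        · exact meet_bowtie_AA hAB hA hk0 hv.1 hwA (Ne.symm hwv) hUnion
        · have hwB : w ∈ B := by
            have : w ∈ A ∪ B := hUnion ▸ Finset.mem_univ w
            exact (Finset.mem_union.mp this).resolve_left hwA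
          rw [bowtieCfg_comm A B u k hAB hUnion]
          exact meet_bowtie_AA hBA hB hk0 hv.2 hwB (Ne.symm hwv) hUBA
      have hr : rateBy (bowtieCfg A B u k) u u w = 1 / (k : ℝ) := by
        rw [rateBy_bowtie, if_pos]
        unfold bEvent
        simp only [if_pos rfl]
        exact ⟨Finset.mem_union_left _ hv.1, hUnion ▸ Finset.mem_univ w⟩
      rw [hm, hr]
    · intro w hwv hwP
      exact absurd (Finset.mem_erase.mpr ⟨hwv, Finset.mem_univ w⟩) hwP
    · rw [utility_bowtie_v hk hAB hA hB hUnion, hcard]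
      field_simp
      ring
    · rw [hcard]
      nlinarith
  · -- a vertex of A other than v
    have huB : u ∉ B := not_mem_other hAB hu huv
    have hcard : ((A.erase u).card : ℝ) = (k : ℝ) - 1 := by
      rw [Finset.card_erase_of_mem hu, hA, Nat.cast_sub (by omega : 1 ≤ k)]
      push_cast; ring
    refine stable_core _ u s hs (A.erase u) (Finset.notMem_erase u A) k hk ?_ ?_
      a b c hb hc hq hneg ?_ ?_
    · intro w hw
      obtain ⟨hwu, hwA⟩ := Finset.mem_erase.mp hw
      rw [fixed_eq]
      have hm : meet (bowtieCfg A B v k) u w = 1 :=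
        meet_bowtie_AA hAB hA hk0 hu hwA (Ne.symm hwu) hUnion
      have hr : rateBy (bowtieCfg A B v k) u u w = 1 / (k : ℝ) := by
        rw [rateBy_bowtie, if_pos]
        unfold bEvent
        simp only [if_neg huv, if_pos hu]
        exact ⟨hu, hwA⟩
      rw [hm, hr]
    · intro w hwu hwP
      have hwA : w ∉ A := fun h => hwP (Finset.mem_erase.mpr ⟨hwu, h⟩)
      have hwB : w ∈ B := by
        have : w ∈ A ∪ B := hUnion ▸ Finset.mem_univ w
        exact (Finset.mem_union.mp this).resolve_left hwA
      rw [fixed_eq]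
      have hm : meet (bowtieCfg A B v k) u w = 1 / (k : ℝ) :=
        meet_bowtie_cross hAB hUnion hu huB hwB hwA
      have hr : rateBy (bowtieCfg A B v k) u u w = 0 := by
        rw [rateBy_bowtie, if_neg]
        unfold bEvent
        simp only [if_neg huv, if_pos hu]
        rintro ⟨-, h⟩; exact hwA h
      rw [hm, hr, sub_zero]
    · rw [utility_bowtie_ne hk hAB hA hB hUnion hu huv, hcard]
      field_simp
      ring
    · rw [hcard]
      exact hb0
end BowtieStab


/-- Let `H_{k,1}` (`k > 2`) consist of two `k`-cliques `A`, `B` sharing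
exactly the vertex `v`. If `1/k < γ = a/c < 1 - 1/k` and `b` is sufficiently small, the
configuration in which every vertex holds a single event inviting all of its neighbours at
rate `1/k` is stable and supports `H_{k,1}`: two distinct vertices are connected iff they lie
in a common clique, and pairs in different cliques have meeting rate at most `1/k`. -/
theorem bowtie_supportable {V : Type*} [Fintype V] [DecidableEq V]
    (k : ℕ) (hk : 2 < k) (A B : Finset V) (v : V)
    (hA : A.card = k) (hB : B.card = k) (hAB : A ∩ B = {v}) (hUnion : A ∪ B = Finset.univ)
    (a c : ℝ) (ha : 0 < a) (hc : 0 < c)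
    (hγ1 : 1 / (k : ℝ) < a / c) (hγ2 : a / c < 1 - 1 / (k : ℝ)) :
    ∃ b₀ > (0 : ℝ), ∀ b : ℝ, 0 < b → b < b₀ →
      Stable a b c (bowtieCfg A B v k) ∧
      (∀ x y : V, x ≠ y →
        (connected (bowtieCfg A B v k) x y ↔ ((x ∈ A ∧ y ∈ A) ∨ (x ∈ B ∧ y ∈ B)))) ∧
      (∀ x y : V, x ∉ B → y ∉ A → x ≠ y →
        meet (bowtieCfg A B v k) x y ≤ 1 / (k : ℝ)) := by
  have hk2 : (2 : ℝ) < (k : ℝ) := by exact_mod_cast hk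
  have hkpos : (0 : ℝ) < (k : ℝ) := by linarith
  have hca : c < (k : ℝ) * a := by
    have h := (div_lt_div_iff₀ hkpos hc).mp hγ1
    linarith
  have hBA : B ∩ A = {v} := by rw [Finset.inter_comm]; exact hAB
  have hUBA : B ∪ A = Finset.univ := by rw [Finset.union_comm]; exact hUnion
  refine ⟨((k : ℝ) - 1) * ((k : ℝ) * a - c),
    mul_pos (by linarith) (by linarith), fun b hb hbb => ?_⟩
  refine ⟨⟨?_, ?_⟩, ?_, ?_⟩
  · -- validity
    intro u e he
    rw [bowtieCfg_apply] at he
    simp only [List.mem_singleton] at he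
    subst he
    refine ⟨?_, by positivity⟩
    unfold bEvent
    split_ifs with h1 h2
    · exact hUnion ▸ Finset.mem_univ u
    · exact h2
    · have : u ∈ A ∪ B := hUnion ▸ Finset.mem_univ u
      exact (Finset.mem_union.mp this).resolve_left h2
  · -- Nash equilibrium
    intro u s hs
    by_cases huA : u ∈ A
    · exact bowtie_stable_at hk hAB hA hB hUnion a b c hc hb hγ1 hγ2 hbb.le huA s hs
    · have huB : u ∈ B := by
        have : u ∈ A ∪ B := hUnion ▸ Finset.mem_univ u
        exact (Finset.mem_union.mp this).resolve_left huA
      rw [bowtieCfg_comm A B v k hAB hUnion]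
      have hγ1' : 1 / (k : ℝ) < a / c := hγ1
      exact bowtie_stable_at hk hBA hB hA hUBA a b c hc hb hγ1 hγ2 hbb.le huB s hs
  · -- connection characterization
    intro x y hxy
    exact connected_bowtie_iff hk hAB hA hB hUnion hxy
  · -- cross-clique meeting rate
    intro x y hxB hyA hxy
    have hx : x ∈ A := by
      have : x ∈ A ∪ B := hUnion ▸ Finset.mem_univ x
      exact (Finset.mem_union.mp this).resolve_right hxB
    have hy : y ∈ B := by
      have : y ∈ A ∪ B := hUnion ▸ Finset.mem_univ y
      exact (Finset.mem_union.mp this).resolve_left hyA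
    exact le_of_eq (meet_bowtie_cross hAB hUnion hx hxB hy hyA)
end
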